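/- arXiv:1306.1033 — 5 statements merged into one kernel-verified Lean document; each statement's English description precedes it below -/
import Mathlib

section
/- A partition λ is a Rouquier partition if and only if every partition with the same p-core and the same p-weight as λ is p-quotient-separated. -/
/-- `f` represents a partition: weakly decreasing with finitely many nonzero parts.
`f r` is the `(r+1)`-th part (0-indexed). -/
def IsPartition (f : ℕ → ℕ) : Prop :=
  (∀ m n : ℕ, m ≤ n → f n ≤ f m) ∧ ∃ N, ∀ n, N ≤ n → f n = 0

/-- `(r, c)` (0-indexed) is a node of the Young diagram of `f`. -/
def Cell (f : ℕ → ℕ) (r c : ℕ) : Prop := c < f r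

/-- The `p`-residue of the node `(r, c)`. -/
def res (p : ℕ) (r c : ℕ) : ZMod p := (c : ZMod p) - (r : ZMod p)

/-- The ramp containing the 0-indexed node `(r, c)`; this equals `c-1+(p-1)(r-1)` in
the paper's 1-indexed convention. -/
def rampOf (p : ℕ) (r c : ℕ) : ℤ := (c : ℤ) + ((p : ℤ) - 1) * (r : ℤ)

/-- `(r, c)` is a removable node of `f`. -/
def Removable (f : ℕ → ℕ) (r c : ℕ) : Prop := c + 1 = f r ∧ f (r + 1) < f r

/-- `(r, c)` is an addable node of `f`. -/
def Addable (f : ℕ → ℕ) (r c : ℕ) : Prop := c = f r ∧ (r = 0 ∨ f r < f (r - 1))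

/-- The set of occupied positions (beads) in the abacus display of the partition `f`:
there is a bead at position `f_j − j` for each `j ≥ 1`. -/
def Occ (f : ℕ → ℕ) : Set ℤ := {x : ℤ | ∃ j : ℕ, x = (f j : ℤ) - ((j : ℤ) + 1)}

/-- `q_i(λ)`: the position of the first vacant position on runner `i` in the abacus
display of the `p`-core of `λ` (computed via the `charge` of runner `i`, which is
invariant under sliding beads up the runner). -/
noncomputable def qpos (p : ℕ) (f : ℕ → ℕ) (i : ZMod p) : ℤ :=
  (i.val : ℤ) + p *
    ((Set.ncard {x : ℤ | x ∈ Occ f ∧ (x : ZMod p) = i ∧ (i.val : ℤ) ≤ x} : ℤ) -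
     (Set.ncard {x : ℤ | x ∉ Occ f ∧ (x : ZMod p) = i ∧ x < (i.val : ℤ)} : ℤ))

/-- The first vacant position on runner `i` of the abacus display of `f`. -/
noncomputable def firstSpace (p : ℕ) (f : ℕ → ℕ) (i : ZMod p) : ℤ :=
  sInf {x : ℤ | (x : ZMod p) = i ∧ x ∉ Occ f}

/-- The last occupied position on runner `i` of the abacus display of `f`. -/
noncomputable def lastBead (p : ℕ) (f : ℕ → ℕ) (i : ZMod p) : ℤ :=
  sSup {x : ℤ | (x : ZMod p) = i ∧ x ∈ Occ f}

/-- `f` is `p`-quotient-separated: there do not exist runners `i ≠ j` such that the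
first space on runner `i` is earlier than the last bead on runner `j` and the first
space on runner `j` is earlier than the last bead on runner `i`. -/
def QSep (p : ℕ) (f : ℕ → ℕ) : Prop :=
  ¬ ∃ i j : ZMod p, i ≠ j ∧ firstSpace p f i < lastBead p f j ∧
      firstSpace p f j < lastBead p f i

/-- The position of the `(k+1)`-th lowest (i.e. latest) bead on runner `i`. -/
noncomputable def nthBead (p : ℕ) (f : ℕ → ℕ) (i : ZMod p) : ℕ → ℤ
  | 0 => sSup {x : ℤ | x ∈ Occ f ∧ (x : ZMod p) = i}
  | k + 1 => sSup {x : ℤ | x ∈ Occ f ∧ (x : ZMod p) = i ∧ x < nthBead p f i k}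

/-- The `p`-quotient component `λ^{(i)}`, as a parts function: its `(k+1)`-th part is
the number of vacant positions on runner `i` earlier than the `(k+1)`-th lowest bead
on runner `i`. -/
noncomputable def quotFn (p : ℕ) (f : ℕ → ℕ) (i : ZMod p) : ℕ → ℕ :=
  fun k => Set.ncard {x : ℤ | x ∉ Occ f ∧ (x : ZMod p) = i ∧ x < nthBead p f i k}

/-- The `p`-weight of `λ`: the number of pairs of positions `x < y` on the same
runner with `x` vacant and `y` occupied. -/
noncomputable def pweight (p : ℕ) (f : ℕ → ℕ) : ℕ :=
  Set.ncard {q : ℤ × ℤ | q.1 < q.2 ∧ ((q.1 : ZMod p) = (q.2 : ZMod p)) ∧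
    q.1 ∉ Occ f ∧ q.2 ∈ Occ f}

/-- `λ` is a Rouquier partition: any two of the values `q_i(λ)` (which are pairwise
distinct, being in distinct residue classes mod `p`) differ by more than `(w−1)p`,
where `w` is the `p`-weight of `λ`. -/
def Rouquier (p : ℕ) (f : ℕ → ℕ) : Prop :=
  ∀ i j : ZMod p, i ≠ j → ((pweight p f : ℤ) - 1) * p < |qpos p f i - qpos p f j|

namespace S12
open Set

/-- all sufficiently small integers are in `B` -/
def Lo (B : Set ℤ) : Prop := ∃ a : ℤ, ∀ x, x < a → x ∈ B
/-- `B` is bounded above -/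
def Hi (B : Set ℤ) : Prop := ∃ b : ℤ, ∀ x ∈ B, x < b

lemma fin_inter_Ici {B : Set ℤ} (hb : Hi B) (m : ℤ) : (B ∩ Ici m).Finite := by
  obtain ⟨b, hb⟩ := hb
  exact (Set.finite_Icc m b).subset (fun x ⟨h1, h2⟩ => ⟨h2, (hb x h1).le⟩)

lemma fin_compl_Iio {B : Set ℤ} (ha : Lo B) (m : ℤ) : (Bᶜ ∩ Iio m).Finite := by
  obtain ⟨a, ha⟩ := ha
  exact (Set.finite_Icc a m).subset (fun x ⟨h1, h2⟩ =>
    ⟨le_of_not_gt fun h => h1 (ha x h), h2.le⟩)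

lemma fin_inter_Ioi {B : Set ℤ} (hb : Hi B) (m : ℤ) : (B ∩ Ioi m).Finite :=
  (fin_inter_Ici hb m).subset (fun x ⟨h1, h2⟩ => ⟨h1, Set.mem_Ici.2 (le_of_lt (Set.mem_Ioi.1 h2))⟩)

noncomputable def chg (B : Set ℤ) : ℤ := ((B ∩ Ici 0).ncard : ℤ) - ((Bᶜ ∩ Iio 0).ncard : ℤ)

lemma key_step {B : Set ℤ} (ha : Lo B) (hb : Hi B) (x : ℤ) :
    ((Bᶜ ∩ Iio (x+1)).ncard : ℤ) - ((B ∩ Ici (x+1)).ncard : ℤ)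
      = ((Bᶜ ∩ Iio x).ncard : ℤ) - ((B ∩ Ici x).ncard : ℤ) + 1 := by
  by_cases hx : x ∈ B
  · have h1 : Bᶜ ∩ Iio (x+1) = Bᶜ ∩ Iio x := by
      ext y
      simp only [mem_inter_iff, mem_compl_iff, mem_Iio]
      constructor
      · rintro ⟨h1, h2⟩
        refine ⟨h1, ?_⟩
        rcases lt_or_eq_of_le (by omega : y ≤ x) with h | h
        · exact h
        · exact absurd (h ▸ hx) h1
      · rintro ⟨h1, h2⟩; exact ⟨h1, by omega⟩
    have h2 : B ∩ Ici x = insert x (B ∩ Ici (x+1)) := by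
      ext y
      simp only [mem_inter_iff, mem_Ici, mem_insert_iff]
      constructor
      · rintro ⟨h1, h2⟩
        rcases eq_or_lt_of_le h2 with h | h
        · exact Or.inl h.symm
        · exact Or.inr ⟨h1, by omega⟩
      · rintro (rfl | ⟨h1, h2⟩)
        · exact ⟨hx, le_refl _⟩
        · exact ⟨h1, by omega⟩
    have h3 : x ∉ B ∩ Ici (x+1) := by simp
    rw [h1, h2, Set.ncard_insert_of_notMem h3 (fin_inter_Ici hb _)]
    push_cast; ring
  · have h1 : Bᶜ ∩ Iio (x+1) = insert x (Bᶜ ∩ Iio x) := by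
      ext y
      simp only [mem_inter_iff, mem_compl_iff, mem_Iio, mem_insert_iff]
      constructor
      · rintro ⟨h1, h2⟩
        rcases lt_or_eq_of_le (by omega : y ≤ x) with h | h
        · exact Or.inr ⟨h1, h⟩
        · exact Or.inl h
      · rintro (rfl | ⟨h1, h2⟩)
        · exact ⟨hx, by omega⟩
        · exact ⟨h1, by omega⟩
    have h2 : B ∩ Ici x = B ∩ Ici (x+1) := by
      ext y
      simp only [mem_inter_iff, mem_Ici]
      constructor
      · rintro ⟨h1, h2⟩
        refine ⟨h1, ?_⟩
        rcases eq_or_lt_of_le h2 with h | h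
        · exact absurd (h ▸ hx) (fun c => c h1)
        · omega
      · rintro ⟨h1, h2⟩; exact ⟨h1, by omega⟩
    have h3 : x ∉ Bᶜ ∩ Iio x := by simp
    rw [h1, h2, Set.ncard_insert_of_notMem h3 (fin_compl_Iio ha _)]
    push_cast; ring

lemma key {B : Set ℤ} (ha : Lo B) (hb : Hi B) (x : ℤ) :
    ((Bᶜ ∩ Iio x).ncard : ℤ) - ((B ∩ Ici x).ncard : ℤ) = x - chg B := by
  induction x using Int.induction_on with
  | zero => simp only [chg]; ring
  | succ n ih => rw [key_step ha hb n] at *; push_cast at *; omega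
  | pred n ih =>
      have := key_step ha hb (-(n:ℤ) - 1)
      rw [show (-(n:ℤ) - 1 + 1) = -(n:ℤ) by ring] at this
      omega


lemma lo_nonempty {B : Set ℤ} (ha : Lo B) : B.Nonempty := by
  obtain ⟨a, ha⟩ := ha; exact ⟨a - 1, ha _ (by omega)⟩

lemma hi_bddAbove {B : Set ℤ} (hb : Hi B) : BddAbove B := by
  obtain ⟨b, hb⟩ := hb; exact ⟨b, fun x hx => (hb x hx).le⟩

lemma compl_nonempty {B : Set ℤ} (hb : Hi B) : Bᶜ.Nonempty := by
  obtain ⟨b, hb⟩ := hb; exact ⟨b, fun hxb => lt_irrefl b (hb b hxb)⟩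

lemma compl_bddBelow {B : Set ℤ} (ha : Lo B) : BddBelow Bᶜ := by
  obtain ⟨a, ha⟩ := ha
  exact ⟨a, fun x hx => le_of_not_gt (fun h => hx (ha x h))⟩

lemma sSup_mem {B : Set ℤ} (ha : Lo B) (hb : Hi B) : sSup B ∈ B :=
  Int.csSup_mem (lo_nonempty ha) (hi_bddAbove hb)

lemma le_sSup' {B : Set ℤ} (hb : Hi B) {x : ℤ} (hx : x ∈ B) : x ≤ sSup B :=
  le_csSup (hi_bddAbove hb) hx

lemma sInf_compl_not_mem {B : Set ℤ} (ha : Lo B) (hb : Hi B) : sInf Bᶜ ∉ B :=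
  Int.csInf_mem (compl_nonempty hb) (compl_bddBelow ha)

lemma sInf_compl_le {B : Set ℤ} (ha : Lo B) {x : ℤ} (hx : x ∉ B) : sInf Bᶜ ≤ x :=
  csInf_le (compl_bddBelow ha) hx

/-- last bead position identity -/
lemma run_sup {B : Set ℤ} (ha : Lo B) (hb : Hi B) :
    sSup B = chg B - 1 + ((Bᶜ ∩ Iio (sSup B)).ncard : ℤ) := by
  have h1 : B ∩ Ici (sSup B) = {sSup B} := by
    ext x
    simp only [mem_inter_iff, mem_Ici, mem_singleton_iff]
    exact ⟨fun ⟨h1, h2⟩ => le_antisymm (le_sSup' hb h1) h2,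
      fun h => by subst h; exact ⟨sSup_mem ha hb, le_refl _⟩⟩
  have := key ha hb (sSup B)
  rw [h1] at this
  simp only [Set.ncard_singleton] at this
  omega

/-- first space position identity -/
lemma run_inf {B : Set ℤ} (ha : Lo B) (hb : Hi B) :
    sInf Bᶜ = chg B - ((B ∩ Ioi (sInf Bᶜ)).ncard : ℤ) := by
  have h1 : Bᶜ ∩ Iio (sInf Bᶜ) = ∅ := by
    ext x
    simp only [mem_inter_iff, mem_compl_iff, mem_Iio, mem_empty_iff_false, iff_false, not_and]
    intro hx
    exact not_lt.2 (sInf_compl_le ha hx)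
  have h2 : B ∩ Ici (sInf Bᶜ) = B ∩ Ioi (sInf Bᶜ) := by
    ext x
    simp only [mem_inter_iff, mem_Ici, mem_Ioi]
    constructor
    · rintro ⟨h1', h2'⟩
      refine ⟨h1', lt_of_le_of_ne h2' ?_⟩
      rintro rfl
      exact sInf_compl_not_mem ha hb h1'
    · rintro ⟨h1', h2'⟩; exact ⟨h1', h2'.le⟩
  have := key ha hb (sInf Bᶜ)
  rw [h1, h2] at this
  simp only [Set.ncard_empty] at this
  omega

lemma chg_of_no_beads {B : Set ℤ} (ha : Lo B) (hb : Hi B) {x : ℤ}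
    (h : B ∩ Ici x = ∅) : chg B = x - ((Bᶜ ∩ Iio x).ncard : ℤ) := by
  have := key ha hb x
  rw [h] at this
  simp only [Set.ncard_empty] at this
  omega

/-- charge is invariant under moving a bead -/
lemma chg_move {B : Set ℤ} (ha : Lo B) (hb : Hi B) {s t : ℤ} (hs : s ∈ B) (ht : t ∉ B) :
    chg (insert t (B \ {s})) = chg B := by
  set B' := insert t (B \ {s}) with hB'
  obtain ⟨b, hbb⟩ := id hb
  have ha' : Lo B' := by
    obtain ⟨a, haa⟩ := ha
    refine ⟨min a s, fun x hx => ?_⟩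
    exact Or.inr ⟨haa x (lt_of_lt_of_le hx (min_le_left _ _)), fun h => by
      simp at h; omega⟩
  have hb' : Hi B' := by
    refine ⟨max b (t+1), fun x hx => ?_⟩
    rcases hx with rfl | ⟨hx, _⟩
    · exact lt_of_lt_of_le (by omega) (le_max_right _ _)
    · exact lt_of_lt_of_le (hbb x hx) (le_max_left _ _)
  set x := max (max b (t+1)) (max (s+1) (t+1)) with hx
  have hxb : ∀ y ∈ B, y < x := fun y hy => lt_of_lt_of_le (hbb y hy) (by omega)
  have hxb' : ∀ y ∈ B', y < x := by
    intro y hy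
    rcases hy with rfl | ⟨hy, _⟩
    · omega
    · exact hxb y hy
  have e1 : B ∩ Ici x = ∅ := by
    ext y; simp only [mem_inter_iff, mem_Ici, mem_empty_iff_false, iff_false, not_and]
    exact fun hy => not_le.2 (hxb y hy)
  have e1' : B' ∩ Ici x = ∅ := by
    ext y; simp only [mem_inter_iff, mem_Ici, mem_empty_iff_false, iff_false, not_and]
    exact fun hy => not_le.2 (hxb' y hy)
  rw [chg_of_no_beads ha hb e1, chg_of_no_beads ha' hb' e1']
  congr 1
  -- show ncard (B'ᶜ ∩ Iio x) = ncard (Bᶜ ∩ Iio x)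
  have hst : s ≠ t := fun h => ht (h ▸ hs)
  have hcompl : B'ᶜ ∩ Iio x = insert s ((Bᶜ ∩ Iio x) \ {t}) := by
    ext y
    simp only [hB', mem_inter_iff, mem_compl_iff, mem_Iio, mem_insert_iff, mem_diff,
      mem_singleton_iff, not_or, mem_diff, not_and, not_not]
    constructor
    · rintro ⟨⟨h1, h2⟩, h3⟩
      by_cases hys : y = s
      · exact Or.inl hys
      · exact Or.inr ⟨⟨fun hyB => hys (h2 hyB), h3⟩, h1⟩
    · rintro (rfl | ⟨⟨h1, h2⟩, h3⟩)
      · exact ⟨⟨hst, fun _ => rfl⟩, by omega⟩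
      · exact ⟨⟨h3, fun hyB => absurd hyB h1⟩, h2⟩
  rw [hcompl]
  have htm : t ∈ Bᶜ ∩ Iio x := ⟨ht, by simp only [mem_Iio]; omega⟩
  have hfin : (Bᶜ ∩ Iio x).Finite := fin_compl_Iio ha x
  have hsn : s ∉ (Bᶜ ∩ Iio x) \ {t} := by
    rintro ⟨⟨h1, _⟩, _⟩; exact h1 hs
  rw [Set.ncard_insert_of_notMem hsn ((hfin.subset (diff_subset)))]
  rw [Set.ncard_diff_singleton_of_mem htm]
  have : 0 < (Bᶜ ∩ Iio x).ncard := (Set.ncard_pos hfin).2 ⟨t, htm⟩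
  omega

lemma chg_Iio (m : ℤ) : chg (Iio m) = m := by
  rcases le_or_gt 0 m with h | h
  · have h1 : Iio m ∩ Ici 0 = Ico 0 m := by ext x; simp [and_comm]
    have h2 : (Iio m)ᶜ ∩ Iio 0 = ∅ := by
      ext x; simp only [compl_Iio, mem_inter_iff, mem_Ici, mem_Iio, mem_empty_iff_false,
        iff_false, not_and]; omega
    rw [chg, h1, h2]
    rw [← Finset.coe_Ico, Set.ncard_coe_finset, Int.card_Ico]
    simp; omega
  · have h1 : Iio m ∩ Ici 0 = ∅ := by
      ext x; simp only [mem_inter_iff, mem_Iio, mem_Ici, mem_empty_iff_false, iff_false,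
        not_and]; omega
    have h2 : (Iio m)ᶜ ∩ Iio 0 = Ico m 0 := by
      ext x; simp only [compl_Iio, mem_inter_iff, mem_Ici, mem_Iio, mem_Ico]
    rw [chg, h1, h2]
    rw [← Finset.coe_Ico, Set.ncard_coe_finset, Int.card_Ico]
    simp; omega

lemma lo_Iio (m : ℤ) : Lo (Iio m) := ⟨m, fun x h => h⟩


/-! ### Runner reindexing -/

variable {p : ℕ}

lemma val_cast (hp : 2 ≤ p) (i : ZMod p) : (((i.val : ℤ)) : ZMod p) = i := by
  haveI : NeZero p := ⟨by omega⟩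
  push_cast
  exact ZMod.natCast_zmod_val i

lemma mem_runner_iff (hp : 2 ≤ p) (i : ZMod p) (x : ℤ) :
    (x : ZMod p) = i ↔ ∃ t : ℤ, x = (i.val : ℤ) + p * t := by
  haveI : NeZero p := ⟨by omega⟩
  have hcast : ((x - (i.val : ℤ) : ℤ) : ZMod p) = (x : ZMod p) - i := by
    push_cast
    rw [ZMod.natCast_zmod_val]
  constructor
  · intro h
    have h2 : ((x - (i.val : ℤ) : ℤ) : ZMod p) = 0 := by rw [hcast, h, sub_self]
    obtain ⟨t, ht⟩ := (ZMod.intCast_zmod_eq_zero_iff_dvd _ p).1 h2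
    exact ⟨t, by omega⟩
  · rintro ⟨t, rfl⟩
    have : ((i.val : ℤ) + p * t - (i.val : ℤ)) = p * t := by ring
    have h2 : (((i.val : ℤ) + p * t - (i.val : ℤ) : ℤ) : ZMod p) = 0 := by
      rw [this]
      exact (ZMod.intCast_zmod_eq_zero_iff_dvd _ p).2 ⟨t, rfl⟩
    rw [hcast] at h2
    exact sub_eq_zero.1 h2

lemma pos_res (hp : 2 ≤ p) (i : ZMod p) (t : ℤ) :
    (((i.val : ℤ) + p * t : ℤ) : ZMod p) = i :=
  (mem_runner_iff hp i _).2 ⟨t, rfl⟩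

lemma pos_inj (hp : 2 ≤ p) (i : ZMod p) :
    Function.Injective (fun t : ℤ => (i.val : ℤ) + p * t) := by
  intro t t' h
  simp only at h
  have hp0 : (0:ℤ) < p := by exact_mod_cast (by omega : 0 < p)
  have : (p:ℤ) * t = p * t' := by omega
  exact mul_left_cancel₀ (by omega) this

/-- `t`-coordinates of runner `i` of a bead set -/
def runnerT (p : ℕ) (i : ZMod p) (B : Set ℤ) : Set ℤ := {t : ℤ | (i.val : ℤ) + p * t ∈ B}

lemma runner_eq_image (hp : 2 ≤ p) (i : ZMod p) (P : ℤ → Prop) :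
    {x : ℤ | (x : ZMod p) = i ∧ P x}
      = (fun t : ℤ => (i.val : ℤ) + p * t) '' {t : ℤ | P ((i.val:ℤ) + p * t)} := by
  ext x
  simp only [Set.mem_setOf_eq, Set.mem_image]
  constructor
  · rintro ⟨hres, hP⟩
    obtain ⟨t, rfl⟩ := (mem_runner_iff hp i x).1 hres
    exact ⟨t, hP, rfl⟩
  · rintro ⟨t, hP, rfl⟩
    exact ⟨pos_res hp i t, hP⟩

lemma ncard_runner (hp : 2 ≤ p) (i : ZMod p) (P : ℤ → Prop) :
    {x : ℤ | (x : ZMod p) = i ∧ P x}.ncard = {t : ℤ | P ((i.val:ℤ) + p * t)}.ncard := by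
  rw [runner_eq_image hp i P]
  exact Set.ncard_image_of_injective _ (pos_inj hp i)

lemma map_csInf (hp : 2 ≤ p) (i : ZMod p) {S : Set ℤ} (hS : S.Nonempty) (hb : BddBelow S) :
    sInf ((fun t : ℤ => (i.val : ℤ) + p * t) '' S) = (i.val : ℤ) + p * sInf S := by
  apply IsLeast.csInf_eq
  constructor
  · exact ⟨sInf S, Int.csInf_mem hS hb, rfl⟩
  · rintro x ⟨t, ht, rfl⟩
    have h1 : sInf S ≤ t := csInf_le hb ht
    have hp0 : (0:ℤ) ≤ p := by positivity
    show (i.val:ℤ) + p * sInf S ≤ (i.val:ℤ) + p * t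
    nlinarith

lemma map_csSup (hp : 2 ≤ p) (i : ZMod p) {S : Set ℤ} (hS : S.Nonempty) (hb : BddAbove S) :
    sSup ((fun t : ℤ => (i.val : ℤ) + p * t) '' S) = (i.val : ℤ) + p * sSup S := by
  apply IsGreatest.csSup_eq
  constructor
  · exact ⟨sSup S, Int.csSup_mem hS hb, rfl⟩
  · rintro x ⟨t, ht, rfl⟩
    have h1 : t ≤ sSup S := le_csSup hb ht
    have hp0 : (0:ℤ) ≤ p := by positivity
    show (i.val:ℤ) + p * t ≤ (i.val:ℤ) + p * sSup S
    nlinarith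

lemma runnerT_lo (hp : 2 ≤ p) {i : ZMod p} {B : Set ℤ} (ha : Lo B) : Lo (runnerT p i B) := by
  obtain ⟨a, ha⟩ := ha
  refine ⟨min (a - i.val) 0, fun t ht => ?_⟩
  have h1 : t < 0 := by omega
  have h2 : (p:ℤ) * t ≤ t := by nlinarith [(by exact_mod_cast (by omega : 1 ≤ p) : (1:ℤ) ≤ p)]
  exact ha _ (by omega)

lemma runnerT_hi (hp : 2 ≤ p) {i : ZMod p} {B : Set ℤ} (hb : Hi B) : Hi (runnerT p i B) := by
  obtain ⟨b, hb⟩ := hb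
  refine ⟨max (b - i.val) 1, fun t ht => ?_⟩
  have h0 : (i.val : ℤ) + p * t < b := hb _ ht
  rcases le_or_gt 1 t with h1 | h1
  · have h2 : t ≤ (p:ℤ) * t := by nlinarith [(by exact_mod_cast (by omega : 1 ≤ p) : (1:ℤ) ≤ p)]
    omega
  · omega

lemma occ_hi {g : ℕ → ℕ} (hg : IsPartition g) : Hi (Occ g) := by
  refine ⟨(g 0 : ℤ) + 1, ?_⟩
  rintro x ⟨j, rfl⟩
  have := hg.1 0 j (Nat.zero_le j)
  push_cast
  omega

lemma occ_lo {g : ℕ → ℕ} (hg : IsPartition g) : Lo (Occ g) := by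
  obtain ⟨N, hN⟩ := hg.2
  refine ⟨-(N:ℤ) - 1, fun x hx => ?_⟩
  set j : ℕ := (-x-1).toNat with hj
  have hj1 : (j : ℤ) = -x - 1 := by omega
  have hj2 : N ≤ j := by omega
  exact ⟨j, by rw [hN j hj2]; push_cast; omega⟩

lemma mul_lt_mul_iff_p (hp : 2 ≤ p) {t t' : ℤ} : (p:ℤ) * t < p * t' ↔ t < t' := by
  have hp0 : (0:ℤ) < p := by exact_mod_cast (by omega : 0 < p)
  exact mul_lt_mul_iff_right₀ hp0

lemma qpos_eq (hp : 2 ≤ p) (g : ℕ → ℕ) (i : ZMod p) :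
    qpos p g i = (i.val : ℤ) + p * chg (runnerT p i (Occ g)) := by
  have hp0 : (0:ℤ) < p := by exact_mod_cast (by omega : 0 < p)
  have e1 : {x : ℤ | x ∈ Occ g ∧ (x : ZMod p) = i ∧ (i.val : ℤ) ≤ x}
      = {x : ℤ | (x : ZMod p) = i ∧ (x ∈ Occ g ∧ (i.val : ℤ) ≤ x)} := by
    ext x; simp only [Set.mem_setOf_eq]; tauto
  have e2 : {x : ℤ | x ∉ Occ g ∧ (x : ZMod p) = i ∧ x < (i.val : ℤ)}
      = {x : ℤ | (x : ZMod p) = i ∧ (x ∉ Occ g ∧ x < (i.val : ℤ))} := by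
    ext x; simp only [Set.mem_setOf_eq]; tauto
  have e3 : {t : ℤ | ((i.val:ℤ) + p * t ∈ Occ g ∧ (i.val:ℤ) ≤ (i.val:ℤ) + p * t)}
      = runnerT p i (Occ g) ∩ Set.Ici 0 := by
    ext t
    simp only [Set.mem_setOf_eq, Set.mem_inter_iff, Set.mem_Ici, runnerT]
    constructor
    · rintro ⟨h1, h2⟩
      refine ⟨h1, ?_⟩
      nlinarith
    · rintro ⟨h1, h2⟩
      exact ⟨h1, by nlinarith⟩
  have e4 : {t : ℤ | ((i.val:ℤ) + p * t ∉ Occ g ∧ (i.val:ℤ) + p * t < (i.val:ℤ))}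
      = (runnerT p i (Occ g))ᶜ ∩ Set.Iio 0 := by
    ext t
    simp only [Set.mem_setOf_eq, Set.mem_inter_iff, Set.mem_Iio, Set.mem_compl_iff, runnerT]
    constructor
    · rintro ⟨h1, h2⟩
      refine ⟨h1, ?_⟩
      nlinarith
    · rintro ⟨h1, h2⟩
      exact ⟨h1, by nlinarith⟩
  rw [qpos, e1, e2, ncard_runner hp, ncard_runner hp, e3, e4, chg]


/-! ### firstSpace / lastBead in runner coordinates -/

lemma compl_runnerT (i : ZMod p) (B : Set ℤ) : (runnerT p i B)ᶜ = {t : ℤ | (i.val:ℤ) + p * t ∉ B} := rfl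

lemma fs_runner (hp : 2 ≤ p) {g : ℕ → ℕ} (hg : IsPartition g) (i : ZMod p) :
    firstSpace p g i = (i.val:ℤ) + p * sInf (runnerT p i (Occ g))ᶜ := by
  have hT : Lo (runnerT p i (Occ g)) := runnerT_lo hp (occ_lo hg)
  have hT' : Hi (runnerT p i (Occ g)) := runnerT_hi hp (occ_hi hg)
  rw [firstSpace, runner_eq_image hp i (fun x => x ∉ Occ g), ← compl_runnerT,
    map_csInf hp i (compl_nonempty hT') (compl_bddBelow hT)]

lemma lb_runner (hp : 2 ≤ p) {g : ℕ → ℕ} (hg : IsPartition g) (i : ZMod p) :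
    lastBead p g i = (i.val:ℤ) + p * sSup (runnerT p i (Occ g)) := by
  have hT : Lo (runnerT p i (Occ g)) := runnerT_lo hp (occ_lo hg)
  have hT' : Hi (runnerT p i (Occ g)) := runnerT_hi hp (occ_hi hg)
  have e : {x : ℤ | (x : ZMod p) = i ∧ x ∈ Occ g}
      = (fun t : ℤ => (i.val:ℤ) + p * t) '' (runnerT p i (Occ g)) :=
    runner_eq_image hp i (fun x => x ∈ Occ g)
  rw [lastBead, e, map_csSup hp i (lo_nonempty hT) (hi_bddAbove hT')]

lemma fs_spec (hp : 2 ≤ p) {g : ℕ → ℕ} (hg : IsPartition g) (i : ZMod p) :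
    ((firstSpace p g i : ℤ) : ZMod p) = i ∧ firstSpace p g i ∉ Occ g := by
  have hT : Lo (runnerT p i (Occ g)) := runnerT_lo hp (occ_lo hg)
  have hT' : Hi (runnerT p i (Occ g)) := runnerT_hi hp (occ_hi hg)
  rw [fs_runner hp hg i]
  exact ⟨pos_res hp i _, sInf_compl_not_mem hT hT'⟩

lemma lb_spec (hp : 2 ≤ p) {g : ℕ → ℕ} (hg : IsPartition g) (i : ZMod p) :
    ((lastBead p g i : ℤ) : ZMod p) = i ∧ lastBead p g i ∈ Occ g := by
  have hT : Lo (runnerT p i (Occ g)) := runnerT_lo hp (occ_lo hg)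
  have hT' : Hi (runnerT p i (Occ g)) := runnerT_hi hp (occ_hi hg)
  rw [lb_runner hp hg i]
  exact ⟨pos_res hp i _, sSup_mem hT hT'⟩

lemma fs_id (hp : 2 ≤ p) {g : ℕ → ℕ} (hg : IsPartition g) (i : ZMod p) :
    firstSpace p g i = qpos p g i
      - p * ({x : ℤ | x ∈ Occ g ∧ (x : ZMod p) = i ∧ firstSpace p g i < x}.ncard : ℤ) := by
  have hp0 : (0:ℤ) < p := by exact_mod_cast (by omega : 0 < p)
  have hT : Lo (runnerT p i (Occ g)) := runnerT_lo hp (occ_lo hg)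
  have hT' : Hi (runnerT p i (Occ g)) := runnerT_hi hp (occ_hi hg)
  set t0 := sInf (runnerT p i (Occ g))ᶜ with ht0
  have hfs : firstSpace p g i = (i.val:ℤ) + p * t0 := fs_runner hp hg i
  have e1 : {x : ℤ | x ∈ Occ g ∧ (x : ZMod p) = i ∧ firstSpace p g i < x}
      = {x : ℤ | (x : ZMod p) = i ∧ (x ∈ Occ g ∧ firstSpace p g i < x)} := by
    ext x; simp only [Set.mem_setOf_eq]; tauto
  have e2 : {t : ℤ | (i.val:ℤ) + p * t ∈ Occ g ∧ firstSpace p g i < (i.val:ℤ) + p * t}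
      = runnerT p i (Occ g) ∩ Set.Ioi t0 := by
    ext t
    simp only [Set.mem_setOf_eq, Set.mem_inter_iff, Set.mem_Ioi, runnerT, hfs]
    constructor
    · rintro ⟨h1, h2⟩
      exact ⟨h1, by nlinarith⟩
    · rintro ⟨h1, h2⟩
      exact ⟨h1, by nlinarith⟩
  rw [e1, ncard_runner hp, e2]
  have hri := run_inf hT hT'
  rw [← ht0] at hri
  rw [hfs, qpos_eq hp g i]
  linear_combination (p:ℤ) * hri

lemma lb_id (hp : 2 ≤ p) {g : ℕ → ℕ} (hg : IsPartition g) (i : ZMod p) :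
    lastBead p g i = qpos p g i - p
      + p * ({x : ℤ | x ∉ Occ g ∧ (x : ZMod p) = i ∧ x < lastBead p g i}.ncard : ℤ) := by
  have hp0 : (0:ℤ) < p := by exact_mod_cast (by omega : 0 < p)
  have hT : Lo (runnerT p i (Occ g)) := runnerT_lo hp (occ_lo hg)
  have hT' : Hi (runnerT p i (Occ g)) := runnerT_hi hp (occ_hi hg)
  set t1 := sSup (runnerT p i (Occ g)) with ht1
  have hlb : lastBead p g i = (i.val:ℤ) + p * t1 := lb_runner hp hg i
  have e1 : {x : ℤ | x ∉ Occ g ∧ (x : ZMod p) = i ∧ x < lastBead p g i}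
      = {x : ℤ | (x : ZMod p) = i ∧ (x ∉ Occ g ∧ x < lastBead p g i)} := by
    ext x; simp only [Set.mem_setOf_eq]; tauto
  have e2 : {t : ℤ | (i.val:ℤ) + p * t ∉ Occ g ∧ (i.val:ℤ) + p * t < lastBead p g i}
      = (runnerT p i (Occ g))ᶜ ∩ Set.Iio t1 := by
    ext t
    simp only [Set.mem_setOf_eq, Set.mem_inter_iff, Set.mem_Iio, Set.mem_compl_iff,
      runnerT, hlb]
    constructor
    · rintro ⟨h1, h2⟩
      exact ⟨h1, by nlinarith⟩
    · rintro ⟨h1, h2⟩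
      exact ⟨h1, by nlinarith⟩
  rw [e1, ncard_runner hp, e2]
  have hrs := run_sup hT hT'
  rw [← ht1] at hrs
  rw [hlb, qpos_eq hp g i]
  linear_combination (p:ℤ) * hrs


/-! ### Forward direction -/

lemma pair_fin {g : ℕ → ℕ} (hg : IsPartition g) :
    {q : ℤ × ℤ | q.1 < q.2 ∧ ((q.1 : ZMod p) = (q.2 : ZMod p)) ∧
      q.1 ∉ Occ g ∧ q.2 ∈ Occ g}.Finite := by
  obtain ⟨a, ha⟩ := occ_lo hg
  obtain ⟨b, hb⟩ := occ_hi hg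
  apply ((Set.finite_Icc a b).prod (Set.finite_Icc a b)).subset
  rintro ⟨x, y⟩ ⟨h1, h2, h3, h4⟩
  have hy : y < b := hb y h4
  have hx : a ≤ x := le_of_not_gt fun h => h3 (ha x h)
  exact ⟨⟨hx, by omega⟩, ⟨by omega, by omega⟩⟩

lemma cross_bound (hp : 2 ≤ p) {g : ℕ → ℕ} (hg : IsPartition g) {i j : ZMod p} (hij : i ≠ j) :
    {x : ℤ | x ∈ Occ g ∧ (x : ZMod p) = i ∧ firstSpace p g i < x}.ncard
      + {x : ℤ | x ∉ Occ g ∧ (x : ZMod p) = j ∧ x < lastBead p g j}.ncard ≤ pweight p g := by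
  classical
  set P := {q : ℤ × ℤ | q.1 < q.2 ∧ ((q.1 : ZMod p) = (q.2 : ZMod p)) ∧
      q.1 ∉ Occ g ∧ q.2 ∈ Occ g} with hP
  have hPfin : P.Finite := pair_fin hg
  set Vi := {x : ℤ | x ∈ Occ g ∧ (x : ZMod p) = i ∧ firstSpace p g i < x} with hVi
  set Uj := {x : ℤ | x ∉ Occ g ∧ (x : ZMod p) = j ∧ x < lastBead p g j} with hUj
  set PV := (fun y : ℤ => (firstSpace p g i, y)) '' Vi with hPV
  set PU := (fun x : ℤ => (x, lastBead p g j)) '' Uj with hPU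
  have hPVsub : PV ⊆ P := by
    rintro q ⟨y, hy, rfl⟩
    exact ⟨hy.2.2, ((fs_spec hp hg i).1).trans hy.2.1.symm, (fs_spec hp hg i).2, hy.1⟩
  have hPUsub : PU ⊆ P := by
    rintro q ⟨x, hx, rfl⟩
    exact ⟨hx.2.2, hx.2.1.trans ((lb_spec hp hg j).1).symm, hx.1, (lb_spec hp hg j).2⟩
  have hdisj : Disjoint PV PU := by
    rw [Set.disjoint_left]
    rintro q ⟨y, hy, rfl⟩ ⟨x, hx, heq⟩
    have h2' : lastBead p g j = y := congrArg Prod.snd heq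
    have hyi : (y : ZMod p) = i := hy.2.1
    rw [← h2'] at hyi
    exact hij (((lb_spec hp hg j).1.symm.trans hyi).symm)
  have hcV : PV.ncard = Vi.ncard :=
    Set.ncard_image_of_injective _ (fun a b h => congrArg Prod.snd h)
  have hcU : PU.ncard = Uj.ncard :=
    Set.ncard_image_of_injective _ (fun a b h => congrArg Prod.fst h)
  have hunion : (PV ∪ PU).ncard = PV.ncard + PU.ncard :=
    Set.ncard_union_eq hdisj (hPfin.subset hPVsub) (hPfin.subset hPUsub)
  have hle : (PV ∪ PU).ncard ≤ P.ncard :=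
    Set.ncard_le_ncard (Set.union_subset hPVsub hPUsub) hPfin
  have : pweight p g = P.ncard := rfl
  omega

lemma forward (hp : 2 ≤ p) {g : ℕ → ℕ} (hg : IsPartition g)
    (hR : ∀ i j : ZMod p, i ≠ j →
      ((pweight p g : ℤ) - 1) * p < |qpos p g i - qpos p g j|) :
    QSep p g := by
  rintro ⟨i, j, hij, h1, h2⟩
  have hp0 : (0:ℤ) < p := by exact_mod_cast (by omega : 0 < p)
  have hfsi := fs_id hp hg i
  have hfsj := fs_id hp hg j
  have hlbi := lb_id hp hg i
  have hlbj := lb_id hp hg j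
  have hb1 := cross_bound hp hg hij
  have hb2 := cross_bound hp hg hij.symm
  have hw1 : ({x : ℤ | x ∈ Occ g ∧ (x : ZMod p) = i ∧ firstSpace p g i < x}.ncard : ℤ)
      + ({x : ℤ | x ∉ Occ g ∧ (x : ZMod p) = j ∧ x < lastBead p g j}.ncard : ℤ)
      ≤ (pweight p g : ℤ) := by exact_mod_cast hb1
  have hw2 : ({x : ℤ | x ∈ Occ g ∧ (x : ZMod p) = j ∧ firstSpace p g j < x}.ncard : ℤ)
      + ({x : ℤ | x ∉ Occ g ∧ (x : ZMod p) = i ∧ x < lastBead p g i}.ncard : ℤ)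
      ≤ (pweight p g : ℤ) := by exact_mod_cast hb2
  have habs := hR i j hij
  rw [hfsi, hlbj] at h1
  rw [hfsj, hlbi] at h2
  have m1 := mul_le_mul_of_nonneg_left hw1 hp0.le
  have m2 := mul_le_mul_of_nonneg_left hw2 hp0.le
  rcases abs_cases (qpos p g i - qpos p g j) with ⟨he, _⟩ | ⟨he, _⟩ <;> rw [he] at habs <;>
    nlinarith [habs, h1, h2, m1, m2]

/-! ### Realization: a good bead set of charge 0 is the bead set of a partition -/

noncomputable def beadEnum (B : Set ℤ) : ℕ → ℤ
  | 0 => sSup B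
  | k + 1 => sSup (B ∩ Set.Iio (beadEnum B k))

variable {B : Set ℤ}

lemma inter_Iio_nonempty (ha : Lo B) (m : ℤ) : (B ∩ Set.Iio m).Nonempty := by
  obtain ⟨a, ha⟩ := ha
  exact ⟨min a m - 1, ha _ (by omega), by simp only [Set.mem_Iio]; omega⟩

lemma inter_Iio_bddAbove (hb : Hi B) (m : ℤ) : BddAbove (B ∩ Set.Iio m) :=
  BddAbove.mono Set.inter_subset_left (hi_bddAbove hb)

lemma beadEnum_mem (ha : Lo B) (hb : Hi B) (k : ℕ) : beadEnum B k ∈ B := by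
  cases k with
  | zero => exact sSup_mem ha hb
  | succ k => exact (Int.csSup_mem (inter_Iio_nonempty ha _) (inter_Iio_bddAbove hb _)).1

lemma beadEnum_succ_lt (ha : Lo B) (hb : Hi B) (k : ℕ) : beadEnum B (k+1) < beadEnum B k :=
  (Int.csSup_mem (inter_Iio_nonempty ha _) (inter_Iio_bddAbove hb _)).2

lemma beadEnum_zero_greatest (hb : Hi B) {x : ℤ} (hx : x ∈ B) : x ≤ beadEnum B 0 :=
  le_sSup' hb hx

lemma beadEnum_succ_greatest (ha : Lo B) (hb : Hi B) {x : ℤ} (hx : x ∈ B) (k : ℕ)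
    (hlt : x < beadEnum B k) : x ≤ beadEnum B (k+1) :=
  le_csSup (inter_Iio_bddAbove hb _) ⟨hx, hlt⟩

lemma beadEnum_count (ha : Lo B) (hb : Hi B) (k : ℕ) :
    (B ∩ Set.Ici (beadEnum B k)).ncard = k + 1 := by
  induction k with
  | zero =>
    have h : B ∩ Set.Ici (beadEnum B 0) = {beadEnum B 0} := by
      ext x
      simp only [Set.mem_inter_iff, Set.mem_Ici, Set.mem_singleton_iff]
      exact ⟨fun ⟨hx, hge⟩ => le_antisymm (beadEnum_zero_greatest hb hx) hge,
        fun h => by subst h; exact ⟨beadEnum_mem ha hb 0, le_refl _⟩⟩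
    rw [h, Set.ncard_singleton]
  | succ k ih =>
    have he : B ∩ Set.Ici (beadEnum B (k+1))
        = insert (beadEnum B (k+1)) (B ∩ Set.Ici (beadEnum B k)) := by
      ext x
      simp only [Set.mem_inter_iff, Set.mem_Ici, Set.mem_insert_iff]
      constructor
      · rintro ⟨hx, hge⟩
        rcases eq_or_lt_of_le hge with h | h
        · exact Or.inl h.symm
        · right
          refine ⟨hx, ?_⟩
          by_contra hxk
          exact absurd (beadEnum_succ_greatest ha hb hx k (lt_of_not_ge hxk)) (not_le.2 h)
      · rintro (rfl | ⟨hx, hge⟩)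
        · exact ⟨beadEnum_mem ha hb _, le_refl _⟩
        · exact ⟨hx, le_of_lt (lt_of_lt_of_le (beadEnum_succ_lt ha hb k) hge)⟩
    have hnm : beadEnum B (k+1) ∉ B ∩ Set.Ici (beadEnum B k) := by
      rintro ⟨_, hge⟩
      exact absurd hge (not_le.2 (beadEnum_succ_lt ha hb k))
    rw [he, Set.ncard_insert_of_notMem hnm (fin_inter_Ici hb _), ih]

lemma beadEnum_surj (ha : Lo B) (hb : Hi B) :
    ∀ k, ∀ x ∈ B, (B ∩ Set.Ici x).ncard = k + 1 → x = beadEnum B k := by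
  intro k
  induction k with
  | zero =>
    intro x hx hc
    refine le_antisymm (beadEnum_zero_greatest hb hx) ?_
    by_contra h
    push_neg at h
    have hsub : {x, beadEnum B 0} ⊆ B ∩ Set.Ici x := by
      rintro y (rfl | rfl)
      exacts [⟨hx, Set.mem_Ici.2 le_rfl⟩, ⟨beadEnum_mem ha hb 0, Set.mem_Ici.2 h.le⟩]
    have h2 : ({x, beadEnum B 0} : Set ℤ).ncard = 2 := Set.ncard_pair (ne_of_lt h)
    have h3 := Set.ncard_le_ncard hsub (fin_inter_Ici hb x)
    omega
  | succ k ih =>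
    intro x hx hc
    have hsplit : B ∩ Set.Ici x = insert x (B ∩ Set.Ioi x) := by
      ext y
      simp only [Set.mem_inter_iff, Set.mem_Ici, Set.mem_Ioi, Set.mem_insert_iff]
      constructor
      · rintro ⟨hy, hge⟩
        rcases eq_or_lt_of_le hge with h | h
        exacts [Or.inl h.symm, Or.inr ⟨hy, h⟩]
      · rintro (rfl | ⟨hy, hgt⟩)
        exacts [⟨hx, le_refl _⟩, ⟨hy, hgt.le⟩]
    have hxn : x ∉ B ∩ Set.Ioi x := by rintro ⟨_, h⟩; exact lt_irrefl x h
    have hcnt : (B ∩ Set.Ioi x).ncard = k + 1 := by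
      rw [hsplit, Set.ncard_insert_of_notMem hxn (fin_inter_Ioi hb x)] at hc
      omega
    have hne : (B ∩ Set.Ioi x).Nonempty :=
      Set.nonempty_of_ncard_ne_zero (by omega)
    set y := sInf (B ∩ Set.Ioi x) with hy
    have hybd : BddBelow (B ∩ Set.Ioi x) := ⟨x, fun z hz => hz.2.le⟩
    have hymem : y ∈ B ∩ Set.Ioi x := Int.csInf_mem hne hybd
    have hIci : B ∩ Set.Ici y = B ∩ Set.Ioi x := by
      ext z
      simp only [Set.mem_inter_iff, Set.mem_Ici, Set.mem_Ioi]
      constructor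
      · rintro ⟨hz, hge⟩
        exact ⟨hz, lt_of_lt_of_le hymem.2 hge⟩
      · rintro ⟨hz, hgt⟩
        exact ⟨hz, csInf_le hybd ⟨hz, hgt⟩⟩
    have hyk : y = beadEnum B k := ih y hymem.1 (by rw [hIci]; exact hcnt)
    have hgr : IsGreatest (B ∩ Set.Iio (beadEnum B k)) x := by
      constructor
      · exact ⟨hx, by rw [← hyk]; exact hymem.2⟩
      · rintro z ⟨hz, hzlt⟩
        rw [← hyk] at hzlt
        by_contra hzx
        push_neg at hzx
        exact absurd (csInf_le hybd ⟨hz, hzx⟩) (not_le.2 hzlt)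
    exact hgr.csSup_eq.symm

lemma realize (ha : Lo B) (hb : Hi B) (hch : chg B = 0) :
    ∃ g : ℕ → ℕ, IsPartition g ∧ Occ g = B := by
  classical
  set β := beadEnum B with hβ
  set g : ℕ → ℕ := fun k => (Bᶜ ∩ Set.Iio (β k)).ncard with hg
  have hβmem : ∀ k, β k ∈ B := beadEnum_mem ha hb
  have hanti : Antitone β := antitone_nat_of_succ_le (fun k => (beadEnum_succ_lt ha hb k).le)
  have hkey : ∀ k, (g k : ℤ) = β k + (k + 1) := by
    intro k
    have h := key ha hb (β k)
    rw [beadEnum_count ha hb k, hch] at h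
    have : (g k : ℤ) = ((Bᶜ ∩ Set.Iio (β k)).ncard : ℤ) := rfl
    rw [this]
    push_cast at h ⊢
    omega
  refine ⟨g, ⟨?_, ?_⟩, ?_⟩
  · intro m n hmn
    exact Set.ncard_le_ncard
      (fun x hx => ⟨hx.1, lt_of_lt_of_le hx.2 (hanti hmn)⟩) (fin_compl_Iio ha _)
  · obtain ⟨a, haa⟩ := id ha
    have hdec : ∀ k : ℕ, β k ≤ β 0 - k := by
      intro k
      induction k with
      | zero => simp
      | succ k ih =>
        have hlt := beadEnum_succ_lt ha hb k
        rw [← hβ] at hlt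
        push_cast
        push_cast at ih
        omega
    refine ⟨(β 0 - a + 1).toNat, fun n hn => ?_⟩
    have hna : (β 0 - a + 1 : ℤ) ≤ n := by
      rcases le_or_gt (β 0 - a + 1) 0 with h | h
      · omega
      · omega
    have hβn : β n < a := by have := hdec n; omega
    have hemp : Bᶜ ∩ Set.Iio (β n) = ∅ := by
      ext x
      simp only [Set.mem_inter_iff, Set.mem_compl_iff, Set.mem_Iio, Set.mem_empty_iff_false,
        iff_false, not_and]
      intro hx hlt
      exact hx (haa x (by omega))
    show (Bᶜ ∩ Set.Iio (β n)).ncard = 0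
    rw [hemp, Set.ncard_empty]
  · ext x
    simp only [Occ, Set.mem_setOf_eq]
    constructor
    · rintro ⟨j, rfl⟩
      have h := hkey j
      have hxβ : (g j : ℤ) - ((j:ℤ) + 1) = β j := by push_cast at h ⊢; omega
      rw [hxβ]
      exact hβmem j
    · intro hx
      have hfin := fin_inter_Ici hb x
      have hpos : 0 < (B ∩ Set.Ici x).ncard := (Set.ncard_pos hfin).2 ⟨x, hx, Set.mem_Ici.2 le_rfl⟩
      set k := (B ∩ Set.Ici x).ncard - 1 with hk
      have hkc : (B ∩ Set.Ici x).ncard = k + 1 := by omega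
      have hxk : x = β k := beadEnum_surj ha hb k x hx hkc
      refine ⟨k, ?_⟩
      have h := hkey k
      rw [hxk]
      push_cast at h ⊢
      omega


/-! ### Charge of a partition's bead set is 0 -/

lemma chg_occ {f : ℕ → ℕ} (hf : IsPartition f) : chg (Occ f) = 0 := by
  obtain ⟨hmono, N, hN⟩ := id hf
  set F := Occ f with hF
  set βf : ℕ → ℤ := fun j => (f j : ℤ) - ((j:ℤ)+1) with hβf
  have hanti : StrictAnti βf := strictAnti_nat_of_succ_lt (fun n => by
    have := hmono n (n+1) (by omega)
    simp only [hβf]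
    push_cast
    omega)
  have hinj : Function.Injective βf := hanti.injective
  have hlow : ∀ x : ℤ, x < -(N:ℤ) → x ∈ F := by
    intro x hx
    set jj : ℕ := (-x-1).toNat with hjj
    have hj1 : (jj : ℤ) = -x - 1 := by omega
    have hj2 : N ≤ jj := by omega
    exact ⟨jj, by rw [hN jj hj2]; push_cast; omega⟩
  have h1 : F ∩ Set.Ici (-(N:ℤ)) = βf '' (Set.Iio N) := by
    ext x
    simp only [hF, Occ, Set.mem_inter_iff, Set.mem_setOf_eq, Set.mem_Ici, Set.mem_image,
      Set.mem_Iio]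
    constructor
    · rintro ⟨⟨jj, rfl⟩, hge⟩
      refine ⟨jj, ?_, rfl⟩
      by_contra hj
      push_neg at hj
      have h0 := hN jj hj
      rw [h0] at hge
      push_cast at hge
      omega
    · rintro ⟨jj, hj, rfl⟩
      refine ⟨⟨jj, rfl⟩, ?_⟩
      simp only [hβf]
      have h0 : (0:ℤ) ≤ f jj := by positivity
      push_cast
      omega
  have hc1 : (F ∩ Set.Ici (-(N:ℤ))).ncard = N := by
    rw [h1, Set.ncard_image_of_injective _ hinj, ← Finset.coe_Iio, Set.ncard_coe_finset,
      Nat.card_Iio]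
  have h2 : Fᶜ ∩ Set.Iio 0 ⊆ Set.Ico (-(N:ℤ)) 0 := by
    rintro x ⟨hx, hneg⟩
    simp only [Set.mem_Iio] at hneg
    refine ⟨?_, hneg⟩
    by_contra h
    push_neg at h
    exact hx (hlow x h)
  have split1 : F ∩ Set.Ici (-(N:ℤ)) = (F ∩ Set.Ico (-(N:ℤ)) 0) ∪ (F ∩ Set.Ici 0) := by
    ext x
    simp only [Set.mem_inter_iff, Set.mem_Ici, Set.mem_Ico, Set.mem_union]
    constructor
    · rintro ⟨hx, hge⟩
      rcases lt_or_ge x 0 with h | h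
      · exact Or.inl ⟨hx, hge, h⟩
      · exact Or.inr ⟨hx, h⟩
    · rintro (⟨hx, hge, _⟩ | ⟨hx, hge⟩)
      · exact ⟨hx, hge⟩
      · exact ⟨hx, by omega⟩
  have split2 : Set.Ico (-(N:ℤ)) 0 = (F ∩ Set.Ico (-(N:ℤ)) 0) ∪ (Fᶜ ∩ Set.Iio 0) := by
    ext x
    simp only [Set.mem_inter_iff, Set.mem_Ico, Set.mem_union, Set.mem_compl_iff, Set.mem_Iio]
    constructor
    · rintro ⟨hge, hlt⟩
      by_cases hx : x ∈ F
      · exact Or.inl ⟨hx, hge, hlt⟩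
      · exact Or.inr ⟨hx, hlt⟩
    · rintro (⟨_, hge, hlt⟩ | hx)
      · exact ⟨hge, hlt⟩
      · exact Set.mem_Ico.1 (h2 ⟨hx.1, hx.2⟩)
  have hfin1 : (F ∩ Set.Ico (-(N:ℤ)) 0).Finite :=
    (Set.finite_Ico _ _).subset (fun x hx => hx.2)
  have hfin2 : (F ∩ Set.Ici 0).Finite := fin_inter_Ici (occ_hi hf) 0
  have hfin3 : (Fᶜ ∩ Set.Iio 0).Finite := fin_compl_Iio (occ_lo hf) 0
  have hd1 : Disjoint (F ∩ Set.Ico (-(N:ℤ)) 0) (F ∩ Set.Ici 0) := by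
    rw [Set.disjoint_left]
    rintro x ⟨_, _, h⟩ ⟨_, h'⟩
    simp only [Set.mem_Ici] at h'
    omega
  have hd2 : Disjoint (F ∩ Set.Ico (-(N:ℤ)) 0) (Fᶜ ∩ Set.Iio 0) := by
    rw [Set.disjoint_left]
    rintro x ⟨hx, _⟩ ⟨hx', _⟩
    exact hx' hx
  have e1 := Set.ncard_union_eq hd1 hfin1 hfin2
  rw [← split1] at e1
  have hcI : (Set.Ico (-(N:ℤ)) 0).ncard = N := by
    rw [← Finset.coe_Ico, Set.ncard_coe_finset, Int.card_Ico]
    omega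
  have e2 := Set.ncard_union_eq hd2 hfin1 hfin3
  rw [← split2] at e2
  rw [chg]
  omega

/-! ### Charge splits over runners -/

lemma pos_nonneg (hp : 2 ≤ p) (i : ZMod p) (t : ℤ) : 0 ≤ (i.val:ℤ) + p * t ↔ 0 ≤ t := by
  haveI : NeZero p := ⟨by omega⟩
  have h1 : (i.val : ℤ) < p := by exact_mod_cast ZMod.val_lt i
  have h2 : (0:ℤ) ≤ i.val := by positivity
  have hp0 : (0:ℤ) < p := by exact_mod_cast (by omega : 0 < p)
  constructor
  · intro h
    by_contra ht
    push_neg at ht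
    have h3 : (p:ℤ) * t ≤ p * (-1) := mul_le_mul_of_nonneg_left (by omega) hp0.le
    linarith
  · intro h
    nlinarith

lemma ncard_fiber [NeZero p] (hp : 2 ≤ p) {S : Set ℤ} (hS : S.Finite) :
    S.ncard = ∑ i : ZMod p, {x | x ∈ S ∧ (x : ZMod p) = i}.ncard := by
  classical
  rw [← hS.coe_toFinset, Set.ncard_coe_finset,
    Finset.card_eq_sum_card_fiberwise (f := fun x : ℤ => (x : ZMod p)) (t := Finset.univ)
      (fun x _ => Finset.mem_univ _)]
  refine Finset.sum_congr rfl (fun i _ => ?_)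
  rw [← Set.ncard_coe_finset (hS.toFinset.filter (fun x : ℤ => (x : ZMod p) = i)),
    Finset.coe_filter]
  congr 1

lemma chg_split [NeZero p] (hp : 2 ≤ p) {B : Set ℤ} (ha : Lo B) (hb : Hi B) :
    chg B = ∑ i : ZMod p, chg (runnerT p i B) := by
  classical
  have hfinA : (B ∩ Set.Ici 0).Finite := fin_inter_Ici hb 0
  have hfinS : (Bᶜ ∩ Set.Iio 0).Finite := fin_compl_Iio ha 0
  have hA := ncard_fiber hp hfinA
  have hS := ncard_fiber hp hfinS
  have hAi : ∀ i : ZMod p, {x | x ∈ B ∩ Set.Ici 0 ∧ (x : ZMod p) = i}.ncard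
      = (runnerT p i B ∩ Set.Ici 0).ncard := by
    intro i
    have e : {x | x ∈ B ∩ Set.Ici 0 ∧ (x : ZMod p) = i}
        = {x : ℤ | (x : ZMod p) = i ∧ (x ∈ B ∧ 0 ≤ x)} := by
      ext x
      simp only [Set.mem_setOf_eq, Set.mem_inter_iff, Set.mem_Ici]
      tauto
    rw [e, ncard_runner hp]
    congr 1
    ext t
    simp only [Set.mem_setOf_eq, Set.mem_inter_iff, Set.mem_Ici, runnerT]
    rw [pos_nonneg hp]
  have hSi : ∀ i : ZMod p, {x | x ∈ Bᶜ ∩ Set.Iio 0 ∧ (x : ZMod p) = i}.ncard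
      = ((runnerT p i B)ᶜ ∩ Set.Iio 0).ncard := by
    intro i
    have e : {x | x ∈ Bᶜ ∩ Set.Iio 0 ∧ (x : ZMod p) = i}
        = {x : ℤ | (x : ZMod p) = i ∧ (x ∉ B ∧ x < 0)} := by
      ext x
      simp only [Set.mem_setOf_eq, Set.mem_inter_iff, Set.mem_Iio, Set.mem_compl_iff]
      tauto
    rw [e, ncard_runner hp]
    congr 1
    ext t
    simp only [Set.mem_setOf_eq, Set.mem_inter_iff, Set.mem_Iio, Set.mem_compl_iff, runnerT]
    constructor
    · rintro ⟨h1, h2⟩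
      exact ⟨h1, by have := (pos_nonneg hp i t).2; omega⟩
    · rintro ⟨h1, h2⟩
      exact ⟨h1, by have := (pos_nonneg hp i t).1; omega⟩
  rw [chg, hA, hS]
  push_cast
  rw [← Finset.sum_sub_distrib]
  refine Finset.sum_congr rfl (fun i _ => ?_)
  rw [hAi i, hSi i, chg]

lemma qpos_res (hp : 2 ≤ p) (f : ℕ → ℕ) (k : ZMod p) :
    ((qpos p f k : ℤ) : ZMod p) = k := by
  haveI : NeZero p := ⟨by omega⟩
  have h : qpos p f k = (k.val : ℤ) + p *
      ((Set.ncard {x : ℤ | x ∈ Occ f ∧ (x : ZMod p) = k ∧ (k.val : ℤ) ≤ x} : ℤ) -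
       (Set.ncard {x : ℤ | x ∉ Occ f ∧ (x : ZMod p) = k ∧ x < (k.val : ℤ)} : ℤ)) := rfl
  rw [h]
  push_cast
  rw [ZMod.natCast_zmod_val, ZMod.natCast_self]
  ring


/-! ### Backward construction -/

lemma backward (hp : 2 ≤ p) {f : ℕ → ℕ} (hf : IsPartition f) {i j : ZMod p} (hij : i ≠ j)
    (hlt : qpos p f i < qpos p f j)
    (hle : qpos p f j - qpos p f i ≤ ((pweight p f : ℤ) - 1) * p) :
    ∃ g : ℕ → ℕ, IsPartition g ∧ (∀ k : ZMod p, qpos p g k = qpos p f k) ∧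
      pweight p g = pweight p f ∧ ¬ QSep p g := by
  classical
  haveI : NeZero p := ⟨by omega⟩
  have hp0 : (0:ℤ) < p := by exact_mod_cast (by omega : 0 < p)
  set w := pweight p f with hwdef
  have hm' : ∀ k : ZMod p, ∃ mv : ℤ, qpos p f k = (k.val : ℤ) + p * mv := fun k => ⟨_, rfl⟩
  choose m hm using hm'
  have hw1 : 1 ≤ (w:ℤ) := by
    have h2 : (1:ℤ) ≤ qpos p f j - qpos p f i := by omega
    nlinarith
  have hstrict : qpos p f j - qpos p f i < ((w:ℤ) - 1) * p := by
    rcases lt_or_eq_of_le hle with h | h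
    · exact h
    · exfalso
      have hc := congrArg (fun z : ℤ => (z : ZMod p)) h
      push_cast at hc
      rw [qpos_res hp, qpos_res hp, ZMod.natCast_self, mul_zero] at hc
      exact hij (sub_eq_zero.1 hc).symm
  set A := qpos p f j - (w:ℤ) * p with hA
  set B : Set ℤ := {x : ℤ | x < qpos p f ((x : ZMod p)) ∧ x ≠ A} ∪ {qpos p f j} with hB
  have hAres : ((A : ℤ) : ZMod p) = j := by
    rw [hA]
    push_cast
    rw [qpos_res hp, ZMod.natCast_self]
    ring
  have hAltq : A < qpos p f j := by
    rw [hA]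
    nlinarith
  have hmemB : ∀ x : ℤ, x ∈ B ↔ (x < qpos p f ((x : ZMod p)) ∧ x ≠ A) ∨ x = qpos p f j := by
    intro x
    simp only [hB, Set.mem_union, Set.mem_setOf_eq, Set.mem_singleton_iff]
  have hAnotB : A ∉ B := by
    rw [hmemB]
    rintro (⟨_, h2⟩ | h1)
    · exact h2 rfl
    · exact absurd h1 (ne_of_lt hAltq)
  have hqjB : qpos p f j ∈ B := by rw [hmemB]; exact Or.inr rfl
  obtain ⟨lo, hi, hbd⟩ : ∃ lo hi : ℤ, ∀ k : ZMod p, lo ≤ qpos p f k ∧ qpos p f k ≤ hi := by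
    have hfin : (Set.range fun k : ZMod p => qpos p f k).Finite := Set.finite_range _
    obtain ⟨lo, hlo⟩ := hfin.bddBelow
    obtain ⟨hi, hhi⟩ := hfin.bddAbove
    exact ⟨lo, hi, fun k => ⟨hlo ⟨k, rfl⟩, hhi ⟨k, rfl⟩⟩⟩
  have haB : Lo B := by
    refine ⟨min lo A, fun x hx => ?_⟩
    rw [hmemB]
    exact Or.inl ⟨lt_of_lt_of_le (by omega : x < lo) (hbd _).1, by omega⟩
  have hbB : Hi B := by
    refine ⟨hi + 1, fun x hx => ?_⟩
    rw [hmemB] at hx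
    rcases hx with ⟨h1, _⟩ | h1
    · have := (hbd ((x : ZMod p))).2
      omega
    · have := (hbd j).2
      omega
  have hpos_lt : ∀ (k : ZMod p) (t s : ℤ),
      ((k.val:ℤ) + p * t < (k.val:ℤ) + p * s ↔ t < s) := by
    intro k t s
    constructor
    · intro h
      have h2 : (p:ℤ) * t < p * s := by omega
      exact lt_of_mul_lt_mul_left h2 hp0.le
    · intro h
      have h2 := (mul_lt_mul_iff_right₀ hp0).2 h
      omega
  have hpos_eqA : ∀ t : ℤ, ((j.val:ℤ) + p * t = A ↔ t = m j - w) := by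
    intro t
    rw [hA, hm j]
    constructor
    · intro h
      have h2 : (p:ℤ) * t = p * (m j - w) := by ring_nf; ring_nf at h; omega
      exact mul_left_cancel₀ (by omega) h2
    · intro h
      rw [h]
      ring
  have hpos_eqq : ∀ t : ℤ, ((j.val:ℤ) + p * t = qpos p f j ↔ t = m j) := by
    intro t
    rw [hm j]
    constructor
    · intro h
      have h2 : (p:ℤ) * t = p * (m j) := by omega
      exact mul_left_cancel₀ (by omega) h2
    · intro h
      rw [h]
  have hrun : ∀ k : ZMod p, k ≠ j → runnerT p k B = Set.Iio (m k) := by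
    intro k hk
    ext t
    have hres := pos_res hp k t
    simp only [runnerT, Set.mem_setOf_eq, Set.mem_Iio]
    rw [hmemB, hres]
    constructor
    · rintro (⟨h1, _⟩ | h1)
      · rw [hm k] at h1
        exact (hpos_lt k t (m k)).1 h1
      · exfalso
        have := congrArg (fun z : ℤ => (z : ZMod p)) h1
        rw [hres] at this
        rw [qpos_res hp] at this
        exact hk this
    · intro ht
      left
      constructor
      · rw [hm k]
        exact (hpos_lt k t (m k)).2 ht
      · intro heq
        have := congrArg (fun z : ℤ => (z : ZMod p)) heq
        rw [hres, hAres] at this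
        exact hk this
  have hrunj : runnerT p j B = insert (m j) (Set.Iio (m j) \ {m j - (w:ℤ)}) := by
    ext t
    have hres := pos_res hp j t
    simp only [runnerT, Set.mem_setOf_eq, Set.mem_insert_iff, Set.mem_diff, Set.mem_Iio,
      Set.mem_singleton_iff]
    rw [hmemB, hres, hpos_eqq t]
    constructor
    · rintro (⟨h1, h2⟩ | h1)
      · right
        rw [hm j] at h1
        exact ⟨(hpos_lt j t (m j)).1 h1, fun hc => h2 ((hpos_eqA t).2 hc)⟩
      · exact Or.inl h1
    · rintro (h1 | ⟨h1, h2⟩)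
      · exact Or.inr h1
      · left
        refine ⟨by rw [hm j]; exact (hpos_lt j t (m j)).2 h1, fun hc => h2 ((hpos_eqA t).1 hc)⟩
  have hchB : chg B = 0 := by
    have hsplitB := chg_split hp haB hbB
    have hsplitF := chg_split hp (occ_lo hf) (occ_hi hf)
    have hrF : ∀ k : ZMod p, chg (runnerT p k (Occ f)) = m k := by
      intro k
      have h1 := qpos_eq hp f k
      rw [hm k] at h1
      have h2 : (p:ℤ) * m k = p * chg (runnerT p k (Occ f)) := by omega
      exact (mul_left_cancel₀ (by omega) h2).symm
    have hrB : ∀ k : ZMod p, chg (runnerT p k B) = m k := by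
      intro k
      by_cases hk : k = j
      · subst hk
        rw [hrunj, chg_move (lo_Iio (m k)) ⟨m k, fun x h => h⟩
          (by simp only [Set.mem_Iio]; omega) (by simp)]
        exact chg_Iio (m k)
      · rw [hrun k hk]
        exact chg_Iio (m k)
    rw [hsplitB]
    rw [chg_occ hf] at hsplitF
    rw [Finset.sum_congr rfl (fun k _ => hrB k)]
    rw [Finset.sum_congr rfl (fun k _ => hrF k)] at hsplitF
    omega
  obtain ⟨g, hgpart, hgocc⟩ := realize haB hbB hchB
  have hgq : ∀ k : ZMod p, qpos p g k = qpos p f k := by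
    intro k
    rw [qpos_eq hp g k, hgocc]
    have hrB : chg (runnerT p k B) = m k := by
      by_cases hk : k = j
      · subst hk
        rw [hrunj, chg_move (lo_Iio (m k)) ⟨m k, fun x h => h⟩
          (by simp only [Set.mem_Iio]; omega) (by simp)]
        exact chg_Iio (m k)
      · rw [hrun k hk]
        exact chg_Iio (m k)
    rw [hrB, ← hm k]
  refine ⟨g, hgpart, hgq, ?_, ?_⟩
  · -- pweight p g = w
    have hyres : ∀ t : ℤ, ((qpos p f j - t * p : ℤ) : ZMod p) = j := by
      intro t
      push_cast
      rw [qpos_res hp, ZMod.natCast_self]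
      ring
    have hE : {q : ℤ × ℤ | q.1 < q.2 ∧ ((q.1 : ZMod p) = (q.2 : ZMod p)) ∧
        q.1 ∉ Occ g ∧ q.2 ∈ Occ g}
        = (fun t : ℤ => (A, qpos p f j - t * p)) '' Set.Ico (0:ℤ) (w:ℤ) := by
      rw [hgocc]
      ext z
      obtain ⟨x, y⟩ := z
      simp only [Set.mem_setOf_eq, Set.mem_image, Set.mem_Ico, Prod.mk.injEq]
      constructor
      · rintro ⟨hxy, hres, hx, hy⟩
        rw [hmemB] at hy
        have hxltq : x < qpos p f ((x : ZMod p)) := by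
          rw [hres]
          rcases hy with ⟨hy1, _⟩ | hy1
          · exact lt_trans hxy hy1
          · rw [hy1] at hxy ⊢
            rw [qpos_res hp]
            exact hxy
        have hxA : x = A := by
          rw [hmemB] at hx
          rcases not_or.1 hx with ⟨hnl, hnr⟩
          by_contra hne
          exact hnl ⟨hxltq, hne⟩
        have hyresj : (y : ZMod p) = j := by rw [← hres, hxA, hAres]
        obtain ⟨s, hs⟩ := (mem_runner_iff hp j y).1 hyresj
        rcases hy with ⟨hy1, hy2⟩ | hy1
        · rw [hyresj] at hy1
          have hslt : s < m j := by
            apply (hpos_lt j s (m j)).1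
            rw [← hs, ← hm j]
            exact hy1
          have hAeq : (j.val:ℤ) + p * (m j - w) = A := by rw [hA, hm j]; ring
          have hsgt : m j - (w:ℤ) < s := by
            apply (hpos_lt j (m j - w) s).1
            rw [← hs, hAeq]
            rw [hxA] at hxy
            exact hxy
          refine ⟨m j - s, ⟨by omega, by omega⟩, hxA.symm, ?_⟩
          linear_combination hm j - hs
        · refine ⟨0, ⟨le_rfl, by omega⟩, hxA.symm, by rw [hy1]; ring⟩
      · rintro ⟨t, ⟨ht0, htw⟩, hxeq, hyeq⟩
        refine ⟨?_, ?_, ?_, ?_⟩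
        · rw [← hxeq, ← hyeq, hA]
          nlinarith
        · rw [← hxeq, ← hyeq, hAres, hyres t]
        · rw [← hxeq]; exact hAnotB
        · rw [← hyeq, hmemB]
          rcases eq_or_lt_of_le ht0 with h0 | h0
          · right
            rw [← h0]
            ring
          · left
            constructor
            · rw [hyres t]
              nlinarith
            · rw [hA]
              intro hc
              have h2 : t * p = w * p := by omega
              have h3 := mul_right_cancel₀ (by omega : (p:ℤ) ≠ 0) h2
              omega
    have hpg : pweight p g
        = ((fun t : ℤ => (A, qpos p f j - t * p)) '' Set.Ico (0:ℤ) (w:ℤ)).ncard := by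
      have hr : pweight p g = Set.ncard {q : ℤ × ℤ | q.1 < q.2 ∧
          ((q.1 : ZMod p) = (q.2 : ZMod p)) ∧ q.1 ∉ Occ g ∧ q.2 ∈ Occ g} := rfl
      rw [hr, hE]
    have hinj2 : Function.Injective (fun t : ℤ => (A, qpos p f j - t * p)) := by
      intro a b h
      have h2 := congrArg Prod.snd h
      simp only at h2
      have h3 : a * p = b * p := by omega
      exact mul_right_cancel₀ (by omega : (p:ℤ) ≠ 0) h3
    rw [hpg, Set.ncard_image_of_injective _ hinj2, ← Finset.coe_Ico, Set.ncard_coe_finset,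
      Int.card_Ico]
    omega
  · -- ¬ QSep p g
    have hresip : ((qpos p f i - p : ℤ) : ZMod p) = i := by
      push_cast
      rw [qpos_res hp, ZMod.natCast_self]
      ring
    have hfsi : firstSpace p g i = qpos p f i := by
      have hr : firstSpace p g i = sInf {x : ℤ | (x : ZMod p) = i ∧ x ∉ Occ g} := rfl
      rw [hr]
      simp only [hgocc]
      apply IsLeast.csInf_eq
      constructor
      · refine ⟨qpos_res hp f i, ?_⟩
        rw [hmemB]
        rintro (⟨h1, _⟩ | h1)
        · rw [qpos_res hp] at h1
          exact lt_irrefl _ h1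
        · exact absurd h1 (ne_of_lt hlt)
      · rintro x ⟨hxres, hxB⟩
        rw [hmemB] at hxB
        rcases not_or.1 hxB with ⟨hnl, hnr⟩
        by_contra hc
        push_neg at hc
        have hxlt : x < qpos p f ((x : ZMod p)) := by rw [hxres]; exact hc
        have hxA : x = A := by
          by_contra hne
          exact hnl ⟨hxlt, hne⟩
        rw [hxA] at hxres
        exact hij (hxres.symm.trans hAres)
    have hlbi : lastBead p g i = qpos p f i - p := by
      have hr : lastBead p g i = sSup {x : ℤ | (x : ZMod p) = i ∧ x ∈ Occ g} := rfl
      rw [hr]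
      simp only [hgocc]
      apply IsGreatest.csSup_eq
      constructor
      · refine ⟨hresip, ?_⟩
        rw [hmemB]
        left
        constructor
        · rw [hresip]
          omega
        · intro hc
          have := congrArg (fun z : ℤ => (z : ZMod p)) hc
          rw [hresip, hAres] at this
          exact hij this
      · rintro x ⟨hxres, hxB⟩
        rw [hmemB] at hxB
        rcases hxB with ⟨h1, _⟩ | h1
        · rw [hxres] at h1
          obtain ⟨s, hs⟩ := (mem_runner_iff hp i x).1 hxres
          have hslt : s < m i := by
            apply (hpos_lt i s (m i)).1
            rw [← hs, ← hm i]
            exact h1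
          have h2 : (p:ℤ) * s ≤ p * (m i - 1) := mul_le_mul_of_nonneg_left (by omega) hp0.le
          have h3 : (p:ℤ) * (m i - 1) = p * m i - p := by ring
          rw [hs, hm i]
          omega
        · exfalso
          rw [h1] at hxres
          exact hij (hxres.symm.trans (qpos_res hp f j))
    have hfsj : firstSpace p g j = A := by
      have hr : firstSpace p g j = sInf {x : ℤ | (x : ZMod p) = j ∧ x ∉ Occ g} := rfl
      rw [hr]
      simp only [hgocc]
      apply IsLeast.csInf_eq
      constructor
      · exact ⟨hAres, hAnotB⟩
      · rintro x ⟨hxres, hxB⟩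
        rw [hmemB] at hxB
        rcases not_or.1 hxB with ⟨hnl, hnr⟩
        by_contra hc
        push_neg at hc
        have hxlt : x < qpos p f ((x : ZMod p)) := by
          rw [hxres]
          omega
        exact hnl ⟨hxlt, by omega⟩
    have hlbj : lastBead p g j = qpos p f j := by
      have hr : lastBead p g j = sSup {x : ℤ | (x : ZMod p) = j ∧ x ∈ Occ g} := rfl
      rw [hr]
      simp only [hgocc]
      apply IsGreatest.csSup_eq
      constructor
      · exact ⟨qpos_res hp f j, hqjB⟩
      · rintro x ⟨hxres, hxB⟩
        rw [hmemB] at hxB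
        rcases hxB with ⟨h1, _⟩ | h1
        · rw [hxres] at h1
          exact h1.le
        · exact le_of_eq h1
    intro hQS
    apply hQS
    refine ⟨i, j, hij, ?_, ?_⟩
    · rw [hfsi, hlbj]
      exact hlt
    · rw [hfsj, hlbi, hA]
      have h4 : ((w:ℤ) - 1) * p = w * p - p := by ring
      omega

end S12


/-- `λ` is a Rouquier partition iff every partition with the same `p`-core (i.e. the
same values `q_i`) and the same `p`-weight as `λ` is `p`-quotient-separated. -/
theorem stmt12 (p : ℕ) (hp : 2 ≤ p) (f : ℕ → ℕ) (hf : IsPartition f) :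
    Rouquier p f ↔
      ∀ g : ℕ → ℕ, IsPartition g → (∀ i : ZMod p, qpos p g i = qpos p f i) →
        pweight p g = pweight p f → QSep p g := by
  constructor
  · intro hR g hg hq hw
    apply S12.forward hp hg
    intro i j hij
    rw [hq i, hq j, hw]
    exact hR i j hij
  · intro H
    by_contra hR
    rw [Rouquier] at hR
    push_neg at hR
    obtain ⟨i, j, hij, hle⟩ := hR
    have hne : qpos p f i ≠ qpos p f j := fun h => hij (by
      rw [← S12.qpos_res hp f i, ← S12.qpos_res hp f j, h])
    rcases lt_or_gt_of_ne hne with hlt | hgt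
    · obtain ⟨g, hgp, hgq, hgw, hgQ⟩ := S12.backward hp hf hij hlt
        (by have h2 := (abs_le.1 hle).1; omega)
      exact hgQ (H g hgp hgq hgw)
    · obtain ⟨g, hgp, hgq, hgw, hgQ⟩ := S12.backward hp hf hij.symm hgt
        (by have h2 := (abs_le.1 hle).2; omega)
      exact hgQ (H g hgp hgq hgw)
end

section
/- Let λ be a p-quotient-separated partition and i ∈ ℤ/pℤ with q_{i−1}(λ) > q_i(λ). Then λ has at least one addable i-node and no removable i-nodes. -/
namespace Ab

open Set

variable {p : ℕ} {f : ℕ → ℕ}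

/-! ### Basic facts about `Occ` -/

lemma occ_le (hf : IsPartition f) {x : ℤ} (hx : x ∈ Occ f) : x ≤ (f 0 : ℤ) - 1 := by
  obtain ⟨j, rfl⟩ := hx
  have := hf.1 0 j (Nat.zero_le j)
  omega

lemma occ_low (hf : IsPartition f) : ∃ a : ℤ, ∀ x : ℤ, x ≤ a → x ∈ Occ f := by
  obtain ⟨N, hN⟩ := hf.2
  refine ⟨-(N : ℤ) - 1, fun x hx => ⟨(-x - 1).toNat, ?_⟩⟩
  have h2 : f ((-x - 1).toNat) = 0 := hN _ (by omega)
  rw [h2]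
  omega

/-! ### Runner parametrization -/

lemma cast_val_eq (hp : 2 ≤ p) (c : ZMod p) : (((c.val : ℤ)) : ZMod p) = c := by
  haveI : NeZero p := ⟨by omega⟩
  push_cast
  rw [ZMod.natCast_val, ZMod.cast_id]

lemma runner_iff (hp : 2 ≤ p) {c : ZMod p} {x : ℤ} :
    ((x : ZMod p) = c) ↔ ∃ t : ℤ, x = (c.val : ℤ) + p * t := by
  haveI : NeZero p := ⟨by omega⟩
  constructor
  · intro h
    have h0 : ((x - (c.val : ℤ) : ℤ) : ZMod p) = 0 := by
      rw [Int.cast_sub, h, cast_val_eq hp, sub_self]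
    obtain ⟨t, ht⟩ := (ZMod.intCast_zmod_eq_zero_iff_dvd _ p).1 h0
    exact ⟨t, by linarith⟩
  · rintro ⟨t, rfl⟩
    rw [Int.cast_add, Int.cast_mul, cast_val_eq hp]
    simp

lemma runner_dvd (hp : 2 ≤ p) {c : ZMod p} {x y : ℤ}
    (hx : (x : ZMod p) = c) (hy : (y : ZMod p) = c) : (p : ℤ) ∣ x - y := by
  obtain ⟨t, rfl⟩ := (runner_iff hp).1 hx
  obtain ⟨s, rfl⟩ := (runner_iff hp).1 hy
  exact ⟨t - s, by ring⟩

/-! ### The runner set in shifted coordinates -/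

def SS (p : ℕ) (f : ℕ → ℕ) (c : ZMod p) : Set ℤ := {t : ℤ | ((c.val : ℤ) + p * t) ∈ Occ f}

noncomputable def mm (p : ℕ) (f : ℕ → ℕ) (c : ZMod p) : ℤ := sInf (SS p f c)ᶜ

noncomputable def MM (p : ℕ) (f : ℕ → ℕ) (c : ZMod p) : ℤ := sSup (SS p f c)

lemma SS_low (hp : 2 ≤ p) (hf : IsPartition f) (c : ZMod p) :
    ∃ a : ℤ, ∀ t : ℤ, t ≤ a → t ∈ SS p f c := by
  obtain ⟨a, ha⟩ := occ_low hf
  refine ⟨min (a - c.val) 0, fun t ht => ha _ ?_⟩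
  have h1 : t ≤ a - c.val := le_trans ht (min_le_left _ _)
  have h2 : t ≤ 0 := le_trans ht (min_le_right _ _)
  have h3 : (p : ℤ) * t ≤ 1 * t := by
    apply mul_le_mul_of_nonpos_right _ h2
    exact_mod_cast Nat.one_le_of_lt hp
  linarith

lemma SS_high (hp : 2 ≤ p) (hf : IsPartition f) (c : ZMod p) :
    ∃ b : ℤ, ∀ t ∈ SS p f c, t ≤ b := by
  refine ⟨max 0 ((f 0 : ℤ) - 1 - c.val), fun t ht => ?_⟩
  have h1 : (c.val : ℤ) + p * t ≤ (f 0 : ℤ) - 1 := occ_le hf ht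
  rcases le_or_gt t 0 with h | h
  · exact le_trans h (le_max_left _ _)
  · have h3 : (1 : ℤ) * t ≤ p * t := by
      apply mul_le_mul_of_nonneg_right _ (le_of_lt h)
      exact_mod_cast Nat.one_le_of_lt hp
    refine le_trans ?_ (le_max_right _ _)
    linarith

lemma SSc_bdd (hp : 2 ≤ p) (hf : IsPartition f) (c : ZMod p) : BddBelow (SS p f c)ᶜ := by
  obtain ⟨a, ha⟩ := SS_low hp hf c
  exact ⟨a + 1, fun t ht => by by_contra h; exact ht (ha t (by omega))⟩

lemma SSc_ne (hp : 2 ≤ p) (hf : IsPartition f) (c : ZMod p) : ((SS p f c)ᶜ).Nonempty := by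
  obtain ⟨b, hb⟩ := SS_high hp hf c
  exact ⟨b + 1, fun h => by have := hb _ h; omega⟩

lemma mm_notMem (hp : 2 ≤ p) (hf : IsPartition f) (c : ZMod p) : mm p f c ∉ SS p f c :=
  Int.csInf_mem (SSc_ne hp hf c) (SSc_bdd hp hf c)

lemma mm_min (hp : 2 ≤ p) (hf : IsPartition f) (c : ZMod p) {t : ℤ} (h : t < mm p f c) :
    t ∈ SS p f c := by
  by_contra h'
  exact absurd (csInf_le (SSc_bdd hp hf c) h') (not_le.2 h)

lemma mm_le (hp : 2 ≤ p) (hf : IsPartition f) (c : ZMod p) {t : ℤ} (h : t ∉ SS p f c) :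
    mm p f c ≤ t := csInf_le (SSc_bdd hp hf c) h

lemma SS_bddAbove (hp : 2 ≤ p) (hf : IsPartition f) (c : ZMod p) : BddAbove (SS p f c) := by
  obtain ⟨b, hb⟩ := SS_high hp hf c
  exact ⟨b, hb⟩

lemma SS_ne (hp : 2 ≤ p) (hf : IsPartition f) (c : ZMod p) : (SS p f c).Nonempty := by
  obtain ⟨a, ha⟩ := SS_low hp hf c
  exact ⟨a, ha a le_rfl⟩

lemma MM_mem (hp : 2 ≤ p) (hf : IsPartition f) (c : ZMod p) : MM p f c ∈ SS p f c :=
  Int.csSup_mem (SS_ne hp hf c) (SS_bddAbove hp hf c)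

lemma MM_max (hp : 2 ≤ p) (hf : IsPartition f) (c : ZMod p) {t : ℤ} (h : t ∈ SS p f c) :
    t ≤ MM p f c := le_csSup (SS_bddAbove hp hf c) h

/-! ### firstSpace and lastBead -/

lemma firstSpace_eq (hp : 2 ≤ p) (hf : IsPartition f) (c : ZMod p) :
    firstSpace p f c = (c.val : ℤ) + p * mm p f c := by
  unfold firstSpace
  obtain ⟨a, ha⟩ := occ_low hf
  apply le_antisymm
  · apply csInf_le
    · refine ⟨a + 1, fun x hx => ?_⟩
      by_contra h
      exact hx.2 (ha x (by omega))
    · exact ⟨(runner_iff hp).2 ⟨mm p f c, rfl⟩, mm_notMem hp hf c⟩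
  · have hmem : ((c.val : ℤ) + p * mm p f c) ∈ {x : ℤ | (x : ZMod p) = c ∧ x ∉ Occ f} :=
      ⟨(runner_iff hp).2 ⟨mm p f c, rfl⟩, mm_notMem hp hf c⟩
    apply le_csInf ⟨_, hmem⟩
    rintro x ⟨hx1, hx2⟩
    obtain ⟨t, rfl⟩ := (runner_iff hp).1 hx1
    have h1 : mm p f c ≤ t := mm_le hp hf c hx2
    have h2 : (p : ℤ) * mm p f c ≤ p * t := by
      apply mul_le_mul_of_nonneg_left h1 (by positivity)
    linarith

lemma lastBead_eq (hp : 2 ≤ p) (hf : IsPartition f) (c : ZMod p) :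
    lastBead p f c = (c.val : ℤ) + p * MM p f c := by
  unfold lastBead
  apply le_antisymm
  · have hmem : ((c.val : ℤ) + p * MM p f c) ∈ {x : ℤ | (x : ZMod p) = c ∧ x ∈ Occ f} :=
      ⟨(runner_iff hp).2 ⟨MM p f c, rfl⟩, MM_mem hp hf c⟩
    apply csSup_le ⟨_, hmem⟩
    rintro x ⟨hx1, hx2⟩
    obtain ⟨t, rfl⟩ := (runner_iff hp).1 hx1
    have h1 : t ≤ MM p f c := MM_max hp hf c hx2
    have h2 : (p : ℤ) * t ≤ p * MM p f c := by
      apply mul_le_mul_of_nonneg_left h1 (by positivity)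
    linarith
  · apply le_csSup
    · refine ⟨(f 0 : ℤ) - 1, fun x hx => occ_le hf hx.2⟩
    · exact ⟨(runner_iff hp).2 ⟨MM p f c, rfl⟩, MM_mem hp hf c⟩

lemma fs_cast (hp : 2 ≤ p) (hf : IsPartition f) (c : ZMod p) :
    ((firstSpace p f c : ℤ) : ZMod p) = c := by
  rw [firstSpace_eq hp hf c]; exact (runner_iff hp).2 ⟨_, rfl⟩

lemma fs_notMem (hp : 2 ≤ p) (hf : IsPartition f) (c : ZMod p) :
    firstSpace p f c ∉ Occ f := by
  rw [firstSpace_eq hp hf c]; exact mm_notMem hp hf c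

lemma fs_min (hp : 2 ≤ p) (hf : IsPartition f) (c : ZMod p) {x : ℤ}
    (hx : (x : ZMod p) = c) (h : x < firstSpace p f c) : x ∈ Occ f := by
  rw [firstSpace_eq hp hf c] at h
  obtain ⟨t, rfl⟩ := (runner_iff hp).1 hx
  have ht : t < mm p f c := by
    by_contra h'
    have : (p : ℤ) * mm p f c ≤ p * t := mul_le_mul_of_nonneg_left (by omega) (by positivity)
    linarith
  exact mm_min hp hf c ht

lemma fs_le (hp : 2 ≤ p) (hf : IsPartition f) (c : ZMod p) {x : ℤ}
    (hx : (x : ZMod p) = c) (h : x ∉ Occ f) : firstSpace p f c ≤ x := by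
  rw [firstSpace_eq hp hf c]
  obtain ⟨t, rfl⟩ := (runner_iff hp).1 hx
  have h1 : mm p f c ≤ t := mm_le hp hf c h
  have h2 : (p : ℤ) * mm p f c ≤ p * t := mul_le_mul_of_nonneg_left h1 (by positivity)
  linarith

lemma lb_cast (hp : 2 ≤ p) (hf : IsPartition f) (c : ZMod p) :
    ((lastBead p f c : ℤ) : ZMod p) = c := by
  rw [lastBead_eq hp hf c]; exact (runner_iff hp).2 ⟨_, rfl⟩

lemma lb_mem (hp : 2 ≤ p) (hf : IsPartition f) (c : ZMod p) : lastBead p f c ∈ Occ f := by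
  rw [lastBead_eq hp hf c]; exact MM_mem hp hf c

lemma lb_max (hp : 2 ≤ p) (hf : IsPartition f) (c : ZMod p) {x : ℤ}
    (hx : (x : ZMod p) = c) (h : x ∈ Occ f) : x ≤ lastBead p f c := by
  rw [lastBead_eq hp hf c]
  obtain ⟨t, rfl⟩ := (runner_iff hp).1 hx
  have h1 : t ≤ MM p f c := MM_max hp hf c h
  have h2 : (p : ℤ) * t ≤ p * MM p f c := mul_le_mul_of_nonneg_left h1 (by positivity)
  linarith

lemma fs_le_lb_add (hp : 2 ≤ p) (hf : IsPartition f) (c : ZMod p) :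
    firstSpace p f c ≤ lastBead p f c + p := by
  rw [firstSpace_eq hp hf c, lastBead_eq hp hf c]
  have h1 : mm p f c ≤ MM p f c + 1 := by
    apply mm_le hp hf c
    intro h
    exact absurd (MM_max hp hf c h) (by omega)
  have h2 : (p : ℤ) * mm p f c ≤ p * (MM p f c + 1) := mul_le_mul_of_nonneg_left h1 (by positivity)
  linarith

/-! ### Counting -/

lemma ncard_Ico_int (a b : ℤ) : (Set.Ico a b).ncard = (b - a).toNat := by
  have h : Set.Ico a b = ↑(Finset.Ico a b) := by simp
  rw [h, Set.ncard_coe_finset]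
  exact Int.card_Ico a b

lemma ncard_Ioc_int (a b : ℤ) : (Set.Ioc a b).ncard = (b - a).toNat := by
  have h : Set.Ioc a b = ↑(Finset.Ioc a b) := by simp
  rw [h, Set.ncard_coe_finset]
  exact Int.card_Ioc a b

lemma abs_count (S : Set ℤ) (a b : ℤ) (hlo : ∀ x ≤ a, x ∈ S) (hhi : ∀ x ∈ S, x ≤ b) :
    ((S ∩ Ici 0).ncard : ℤ) - ((Sᶜ ∩ Iio 0).ncard : ℤ)
      = sInf Sᶜ + ((S ∩ Ioi (sInf Sᶜ)).ncard : ℤ) := by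
  set m := sInf Sᶜ with hm
  have hbdd : BddBelow Sᶜ := ⟨a + 1, fun x hx => by by_contra h; exact hx (hlo x (by omega))⟩
  have hne : Sᶜ.Nonempty := ⟨b + 1, fun h => by have := hhi _ h; omega⟩
  have hmS : m ∉ S := Int.csInf_mem hne hbdd
  have hlt : ∀ x < m, x ∈ S := by
    intro x hx
    by_contra h
    exact absurd (csInf_le hbdd h) (by omega)
  have fin1 : (S ∩ Ici 0).Finite := by
    apply (Set.finite_Icc (0 : ℤ) b).subset
    rintro x ⟨h1, h2⟩
    exact ⟨h2, hhi x h1⟩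
  have fin3 : (S ∩ Ioi m).Finite := by
    apply (Set.finite_Icc (m + 1) b).subset
    rintro x ⟨h1, h2⟩
    exact ⟨by simpa using h2, hhi x h1⟩
  rcases le_or_gt 0 m with h0 | h0
  · have e2 : Sᶜ ∩ Iio 0 = ∅ := by
      ext x
      simp only [mem_inter_iff, mem_compl_iff, mem_Iio, mem_empty_iff_false, iff_false, not_and]
      intro h1 h2
      exact h1 (hlt x (by omega))
    have e1 : S ∩ Ici 0 = Ico 0 m ∪ (S ∩ Ioi m) := by
      ext x
      simp only [mem_inter_iff, mem_Ici, mem_union, mem_Ico, mem_Ioi]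
      constructor
      · rintro ⟨h1, h2⟩
        rcases lt_trichotomy x m with h | h | h
        · exact Or.inl ⟨h2, h⟩
        · exact absurd (h ▸ h1) hmS
        · exact Or.inr ⟨h1, h⟩
      · rintro (⟨h1, h2⟩ | ⟨h1, h2⟩)
        · exact ⟨hlt x h2, h1⟩
        · exact ⟨h1, by omega⟩
    have hdisj : Disjoint (Ico (0 : ℤ) m) (S ∩ Ioi m) := by
      rw [Set.disjoint_left]
      rintro x hx1 ⟨_, hx2⟩
      have h1 : x < m := hx1.2
      have h2 : m < x := hx2
      omega
    rw [e1, e2, Set.ncard_union_eq hdisj (Set.finite_Ico 0 m) fin3, ncard_Ico_int]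
    simp only [Set.ncard_empty]
    push_cast
    omega
  · have e2 : Sᶜ ∩ Iio 0 = Ico m 0 \ S := by
      ext x
      simp only [mem_inter_iff, mem_compl_iff, mem_Iio, mem_diff, mem_Ico]
      constructor
      · rintro ⟨h1, h2⟩
        exact ⟨⟨csInf_le hbdd h1, h2⟩, h1⟩
      · rintro ⟨⟨_, h2⟩, h3⟩
        exact ⟨h3, h2⟩
    have e1 : S ∩ Ioi m = (S ∩ Ioo m 0) ∪ (S ∩ Ici 0) := by
      ext x
      simp only [mem_inter_iff, mem_Ioi, mem_union, mem_Ioo, mem_Ici]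
      constructor
      · rintro ⟨h1, h2⟩
        rcases le_or_gt 0 x with h | h
        · exact Or.inr ⟨h1, h⟩
        · exact Or.inl ⟨h1, h2, h⟩
      · rintro (⟨h1, h2, _⟩ | ⟨h1, h2⟩)
        · exact ⟨h1, h2⟩
        · exact ⟨h1, by omega⟩
    have einter : Ico m 0 ∩ S = S ∩ Ioo m 0 := by
      ext x
      simp only [mem_inter_iff, mem_Ico, mem_Ioo]
      constructor
      · rintro ⟨⟨h1, h2⟩, h3⟩
        refine ⟨h3, ?_, h2⟩
        rcases eq_or_lt_of_le h1 with h | h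
        · exact absurd (h ▸ h3) hmS
        · exact h
      · rintro ⟨h1, h2, h3⟩
        exact ⟨⟨le_of_lt h2, h3⟩, h1⟩
    have key := Set.ncard_inter_add_ncard_diff_eq_ncard (Ico m 0) S (Set.finite_Ico m 0)
    rw [einter, ncard_Ico_int] at key
    have hdisj : Disjoint (S ∩ Ioo m 0) (S ∩ Ici 0) := by
      rw [Set.disjoint_left]
      rintro x ⟨_, hx1⟩ ⟨_, hx2⟩
      have h1 : x < 0 := hx1.2
      have h2 : (0 : ℤ) ≤ x := hx2
      omega
    have fin4 : (S ∩ Ioo m 0).Finite := fin3.subset (by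
      rintro x ⟨h1, h2, _⟩
      exact ⟨h1, h2⟩)
    have e1card := congrArg Set.ncard e1
    rw [Set.ncard_union_eq hdisj fin4 fin1] at e1card
    rw [e2, e1card]
    push_cast
    omega

/-! ### qpos via the runner set -/

lemma phi_inj (hp : 2 ≤ p) (c : ZMod p) :
    Function.Injective (fun t : ℤ => (c.val : ℤ) + p * t) := by
  intro s t h
  simp only at h
  have hp0 : ((p : ℤ)) ≠ 0 := Int.natCast_ne_zero.2 (by omega)
  have h2 : (p : ℤ) * s = p * t := by linarith
  exact mul_left_cancel₀ hp0 h2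

lemma img1 (hp : 2 ≤ p) (c : ZMod p) :
    {x : ℤ | x ∈ Occ f ∧ (x : ZMod p) = c ∧ (c.val : ℤ) ≤ x}
      = (fun t : ℤ => (c.val : ℤ) + p * t) '' (SS p f c ∩ Ici 0) := by
  have hp0 : (0 : ℤ) < p := by exact_mod_cast (by omega : 0 < p)
  ext x
  simp only [mem_image, mem_inter_iff, mem_Ici, mem_setOf_eq]
  constructor
  · rintro ⟨h1, h2, h3⟩
    obtain ⟨t, rfl⟩ := (runner_iff hp).1 h2
    refine ⟨t, ⟨h1, ?_⟩, rfl⟩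
    by_contra hc
    push_neg at hc
    have := mul_neg_of_pos_of_neg hp0 hc
    linarith
  · rintro ⟨t, ⟨h1, h2⟩, rfl⟩
    have := mul_nonneg (le_of_lt hp0) h2
    exact ⟨h1, (runner_iff hp).2 ⟨t, rfl⟩, by linarith⟩

lemma img2 (hp : 2 ≤ p) (c : ZMod p) :
    {x : ℤ | x ∉ Occ f ∧ (x : ZMod p) = c ∧ x < (c.val : ℤ)}
      = (fun t : ℤ => (c.val : ℤ) + p * t) '' ((SS p f c)ᶜ ∩ Iio 0) := by
  have hp0 : (0 : ℤ) < p := by exact_mod_cast (by omega : 0 < p)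
  ext x
  simp only [mem_image, mem_inter_iff, mem_Iio, mem_compl_iff, mem_setOf_eq]
  constructor
  · rintro ⟨h1, h2, h3⟩
    obtain ⟨t, rfl⟩ := (runner_iff hp).1 h2
    refine ⟨t, ⟨h1, ?_⟩, rfl⟩
    by_contra hc
    push_neg at hc
    have := mul_nonneg (le_of_lt hp0) hc
    linarith
  · rintro ⟨t, ⟨h1, h2⟩, rfl⟩
    have := mul_neg_of_pos_of_neg hp0 h2
    exact ⟨h1, (runner_iff hp).2 ⟨t, rfl⟩, by linarith⟩

lemma img3 (hp : 2 ≤ p) (c : ZMod p) (mq : ℤ) :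
    {x : ℤ | x ∈ Occ f ∧ (x : ZMod p) = c ∧ (c.val : ℤ) + p * mq < x}
      = (fun t : ℤ => (c.val : ℤ) + p * t) '' (SS p f c ∩ Ioi mq) := by
  have hp0 : (0 : ℤ) < p := by exact_mod_cast (by omega : 0 < p)
  ext x
  simp only [mem_image, mem_inter_iff, mem_Ioi, mem_setOf_eq]
  constructor
  · rintro ⟨h1, h2, h3⟩
    obtain ⟨t, rfl⟩ := (runner_iff hp).1 h2
    refine ⟨t, ⟨h1, ?_⟩, rfl⟩
    have h4 : (p : ℤ) * mq < p * t := by linarith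
    exact lt_of_mul_lt_mul_left h4 (le_of_lt hp0)
  · rintro ⟨t, ⟨h1, h2⟩, rfl⟩
    have := mul_lt_mul_of_pos_left h2 hp0
    exact ⟨h1, (runner_iff hp).2 ⟨t, rfl⟩, by linarith⟩

lemma qpos_eq_SS (hp : 2 ≤ p) (hf : IsPartition f) (c : ZMod p) :
    qpos p f c = (c.val : ℤ) + p * (mm p f c + ((SS p f c ∩ Ioi (mm p f c)).ncard : ℤ)) := by
  obtain ⟨a, ha⟩ := SS_low hp hf c
  obtain ⟨b, hb⟩ := SS_high hp hf c
  have habs := abs_count (SS p f c) a b ha hb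
  unfold qpos
  rw [img1 hp c, img2 hp c,
      Set.ncard_image_of_injective _ (phi_inj hp c),
      Set.ncard_image_of_injective _ (phi_inj hp c)]
  have hmm : sInf (SS p f c)ᶜ = mm p f c := rfl
  rw [hmm] at habs
  linear_combination (p : ℤ) * habs

lemma T_card (hp : 2 ≤ p) (hf : IsPartition f) (c : ZMod p) :
    {x : ℤ | x ∈ Occ f ∧ (x : ZMod p) = c ∧ firstSpace p f c < x}.ncard
      = (SS p f c ∩ Ioi (mm p f c)).ncard := by
  rw [firstSpace_eq hp hf c, img3 hp c (mm p f c),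
      Set.ncard_image_of_injective _ (phi_inj hp c)]

lemma qpos_eq_fs (hp : 2 ≤ p) (hf : IsPartition f) (c : ZMod p) :
    qpos p f c = firstSpace p f c
      + p * ({x : ℤ | x ∈ Occ f ∧ (x : ZMod p) = c ∧ firstSpace p f c < x}.ncard : ℤ) := by
  rw [qpos_eq_SS hp hf c, T_card hp hf c, firstSpace_eq hp hf c]
  ring

lemma T_finite (hp : 2 ≤ p) (hf : IsPartition f) (c : ZMod p) :
    {x : ℤ | x ∈ Occ f ∧ (x : ZMod p) = c ∧ firstSpace p f c < x}.Finite := by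
  apply (Set.finite_Icc (firstSpace p f c + 1) ((f 0 : ℤ) - 1)).subset
  rintro x ⟨h1, _, h3⟩
  exact ⟨by omega, occ_le hf h1⟩

lemma fs_le_qpos (hp : 2 ≤ p) (hf : IsPartition f) (c : ZMod p) :
    firstSpace p f c ≤ qpos p f c := by
  rw [qpos_eq_fs hp hf c]
  have h1 : (0 : ℤ) ≤ (p : ℤ) * ({x : ℤ | x ∈ Occ f ∧ (x : ZMod p) = c ∧ firstSpace p f c < x}.ncard : ℤ) := by
    positivity
  linarith

lemma exists_bead_above (hp : 2 ≤ p) (hf : IsPartition f) (c : ZMod p)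
    (h : firstSpace p f c < qpos p f c) :
    ∃ x, x ∈ Occ f ∧ (x : ZMod p) = c ∧ firstSpace p f c < x := by
  rw [qpos_eq_fs hp hf c] at h
  have hne : {x : ℤ | x ∈ Occ f ∧ (x : ZMod p) = c ∧ firstSpace p f c < x}.ncard ≠ 0 := by
    intro h0
    rw [h0] at h
    simp at h
  obtain ⟨x, hx⟩ := Set.nonempty_of_ncard_ne_zero hne
  exact ⟨x, hx⟩

lemma qpos_ge_of_bead (hp : 2 ≤ p) (hf : IsPartition f) (c : ZMod p)
    (h : ∃ x, x ∈ Occ f ∧ (x : ZMod p) = c ∧ firstSpace p f c < x) :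
    firstSpace p f c + p ≤ qpos p f c := by
  rw [qpos_eq_fs hp hf c]
  obtain ⟨x, hx⟩ := h
  have h1 : 0 < {x : ℤ | x ∈ Occ f ∧ (x : ZMod p) = c ∧ firstSpace p f c < x}.ncard :=
    (Set.ncard_pos (T_finite hp hf c)).2 ⟨x, hx⟩
  have h2 : (1 : ℤ) ≤ ({x : ℤ | x ∈ Occ f ∧ (x : ZMod p) = c ∧ firstSpace p f c < x}.ncard : ℤ) := by
    exact_mod_cast h1
  have h3 : (p : ℤ) * 1 ≤ (p : ℤ) * ({x : ℤ | x ∈ Occ f ∧ (x : ZMod p) = c ∧ firstSpace p f c < x}.ncard : ℤ) :=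
    mul_le_mul_of_nonneg_left h2 (by positivity)
  linarith

lemma qpos_le_max (hp : 2 ≤ p) (hf : IsPartition f) (c : ZMod p) :
    qpos p f c ≤ max (firstSpace p f c) (lastBead p f c) := by
  rcases Set.eq_empty_or_nonempty (SS p f c ∩ Ioi (mm p f c)) with he | hne
  · refine le_trans ?_ (le_max_left _ _)
    rw [qpos_eq_SS hp hf c, he, firstSpace_eq hp hf c]
    simp
  · refine le_trans ?_ (le_max_right _ _)
    obtain ⟨t0, ht0⟩ := hne
    have hsub : SS p f c ∩ Ioi (mm p f c) ⊆ Ioc (mm p f c) (MM p f c) := by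
      rintro t ⟨h1, h2⟩
      exact ⟨h2, MM_max hp hf c h1⟩
    have hcard : (SS p f c ∩ Ioi (mm p f c)).ncard ≤ (MM p f c - mm p f c).toNat := by
      rw [← ncard_Ioc_int]
      exact Set.ncard_le_ncard hsub (Set.finite_Ioc _ _)
    have hlt : mm p f c < MM p f c := lt_of_lt_of_le ht0.2 (MM_max hp hf c ht0.1)
    have hcast : ((SS p f c ∩ Ioi (mm p f c)).ncard : ℤ) ≤ MM p f c - mm p f c := by
      have := Int.toNat_of_nonneg (by omega : (0 : ℤ) ≤ MM p f c - mm p f c)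
      omega
    rw [qpos_eq_SS hp hf c, lastBead_eq hp hf c]
    have h2 : (p : ℤ) * (mm p f c + ((SS p f c ∩ Ioi (mm p f c)).ncard : ℤ)) ≤ p * MM p f c :=
      mul_le_mul_of_nonneg_left (by linarith) (by positivity)
    linarith

/-! ### Node correspondences -/

lemma addable_of (hf : IsPartition f) {x : ℤ} (hx : x ∉ Occ f) (hx1 : x - 1 ∈ Occ f)
    (i : ZMod p) (hres : (x : ZMod p) = i) :
    ∃ r c, Addable f r c ∧ res p r c = i := by
  obtain ⟨r, hr⟩ := hx1
  refine ⟨r, f r, ⟨rfl, ?_⟩, ?_⟩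
  · rcases Nat.eq_zero_or_pos r with h | h
    · exact Or.inl h
    right
    by_contra hle
    push_neg at hle
    have h1 : f (r - 1) = f r := le_antisymm hle (hf.1 (r - 1) r (by omega))
    apply hx
    refine ⟨r - 1, ?_⟩
    rw [h1]
    have : ((r - 1 : ℕ) : ℤ) = (r : ℤ) - 1 := by omega
    rw [this]
    omega
  · have hxeq : x = (f r : ℤ) - r := by omega
    rw [← hres, hxeq]
    unfold res
    push_cast
    ring

lemma removable_to (hf : IsPartition f) {r c : ℕ} (h : Removable f r c) :
    ((f r : ℤ) - ((r : ℤ) + 1)) ∈ Occ f ∧ ((f r : ℤ) - ((r : ℤ) + 1) - 1) ∉ Occ f ∧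
      ((((f r : ℤ) - ((r : ℤ) + 1)) : ℤ) : ZMod p) = res p r c := by
  obtain ⟨hc, hlt⟩ := h
  refine ⟨⟨r, rfl⟩, ?_, ?_⟩
  · rintro ⟨j, hj⟩
    rcases le_or_gt j r with hle | hgt
    · have := hf.1 j r hle
      omega
    · have := hf.1 (r + 1) j hgt
      omega
  · have hfr : (f r : ℤ) = (c : ℤ) + 1 := by omega
    unfold res
    rw [hfr]
    push_cast
    ring

end Ab

/-- If `λ` is `p`-quotient-separated and `q_{i−1}(λ) > q_i(λ)`, then `λ` has at least
one addable `i`-node and no removable `i`-nodes. -/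
theorem stmt13 (p : ℕ) (hp : 2 ≤ p) (f : ℕ → ℕ) (hf : IsPartition f)
    (hqs : QSep p f) (i : ZMod p) (hq : qpos p f i < qpos p f (i - 1)) :
    (∃ r c, Addable f r c ∧ res p r c = i) ∧
      (∀ r c, Removable f r c → res p r c ≠ i) := by
  haveI : Fact (1 < p) := ⟨hp⟩
  set j : ZMod p := i - 1 with hj
  have hij : i ≠ j := by
    rw [hj]
    intro h
    exact one_ne_zero (sub_eq_self.1 h.symm)
  have hsep : lastBead p f j ≤ firstSpace p f i ∨ lastBead p f i ≤ firstSpace p f j := by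
    by_contra h
    push_neg at h
    exact hqs ⟨i, j, hij, h.1, h.2⟩
  have hcast_pred : ∀ x : ℤ, (x : ZMod p) = i → ((x - 1 : ℤ) : ZMod p) = j := by
    intro x hx
    rw [hj, Int.cast_sub, hx, Int.cast_one]
  have hcast_succ : ∀ x : ℤ, (x : ZMod p) = j → ((x + 1 : ℤ) : ZMod p) = i := by
    intro x hx
    rw [Int.cast_add, hx, Int.cast_one, hj]
    ring
  rcases hsep with hBA | hAA
  · -- Case: lastBead j ≤ firstSpace i
    rcases lt_trichotomy (firstSpace p f i) (firstSpace p f j) with hlt | heq | hgt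
    · -- fs i < fs j
      have hqj_le : qpos p f j ≤ firstSpace p f j := by
        have h1 := Ab.qpos_le_max hp hf j
        rw [max_eq_left (by omega : lastBead p f j ≤ firstSpace p f j)] at h1
        exact h1
      have hfsj_le : firstSpace p f j ≤ firstSpace p f i + p := by
        have := Ab.fs_le_lb_add hp hf j
        omega
      have hnobead : ¬ ∃ x, x ∈ Occ f ∧ (x : ZMod p) = i ∧ firstSpace p f i < x := by
        intro hex
        have := Ab.qpos_ge_of_bead hp hf i hex
        omega
      constructor
      · apply Ab.addable_of hf (Ab.fs_notMem hp hf i) ?_ i (Ab.fs_cast hp hf i)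
        exact Ab.fs_min hp hf j (hcast_pred _ (Ab.fs_cast hp hf i)) (by omega)
      · intro r c hrem hres
        obtain ⟨hl1, hl2, hl3⟩ := Ab.removable_to (p := p) hf hrem
        rw [hres] at hl3
        have hle : ¬ firstSpace p f i < (f r : ℤ) - ((r : ℤ) + 1) :=
          fun h => hnobead ⟨_, hl1, hl3, h⟩
        have hne : (f r : ℤ) - ((r : ℤ) + 1) ≠ firstSpace p f i :=
          fun h => (Ab.fs_notMem hp hf i) (h ▸ hl1)
        exact hl2 (Ab.fs_min hp hf j (hcast_pred _ hl3) (by omega))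
    · exfalso
      apply hij
      rw [← Ab.fs_cast hp hf i, ← Ab.fs_cast hp hf j, heq]
    · -- fs j < fs i
      exfalso
      have h1 := Ab.qpos_le_max hp hf j
      have h2 : max (firstSpace p f j) (lastBead p f j) ≤ firstSpace p f i :=
        max_le (le_of_lt hgt) hBA
      have h3 := Ab.fs_le_qpos hp hf i
      omega
  · -- Case: lastBead i ≤ firstSpace j
    have norem : ∀ r c, Removable f r c → res p r c ≠ i := by
      intro r c hrem hres
      obtain ⟨hl1, hl2, hl3⟩ := Ab.removable_to (p := p) hf hrem
      rw [hres] at hl3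
      have h1 : (f r : ℤ) - ((r : ℤ) + 1) ≤ lastBead p f i := Ab.lb_max hp hf i hl3 hl1
      have h2 : firstSpace p f j ≤ (f r : ℤ) - ((r : ℤ) + 1) - 1 :=
        Ab.fs_le hp hf j (hcast_pred _ hl3) hl2
      omega
    refine ⟨?_, norem⟩
    by_cases hcase : firstSpace p f i - 1 < firstSpace p f j
    · apply Ab.addable_of hf (Ab.fs_notMem hp hf i) ?_ i (Ab.fs_cast hp hf i)
      exact Ab.fs_min hp hf j (hcast_pred _ (Ab.fs_cast hp hf i)) (by omega)
    · push_neg at hcase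
      have h2 : firstSpace p f i ≤ lastBead p f i + p := Ab.fs_le_lb_add hp hf i
      have hdvd : (p : ℤ) ∣ firstSpace p f j - (lastBead p f i - 1) :=
        Ab.runner_dvd hp (Ab.fs_cast hp hf j) (hcast_pred _ (Ab.lb_cast hp hf i))
      have hds : firstSpace p f j - (lastBead p f i - 1) = p := by
        have h4 := Int.le_of_dvd (by omega) hdvd
        have h5 : firstSpace p f j - (lastBead p f i - 1) ≤ p := by omega
        omega
      have hfsi : firstSpace p f i = lastBead p f i + p := by omega
      have hqi : qpos p f i = firstSpace p f i := by
        have hmax := Ab.qpos_le_max hp hf i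
        have hge := Ab.fs_le_qpos hp hf i
        rw [max_eq_left (by omega : lastBead p f i ≤ firstSpace p f i)] at hmax
        omega
      have hqj : firstSpace p f j < qpos p f j := by omega
      obtain ⟨b, hb1, hb2, hb3⟩ := Ab.exists_bead_above hp hf j hqj
      have hx1 : (b + 1) - 1 ∈ Occ f := by simpa using hb1
      apply Ab.addable_of hf ?_ hx1 i (hcast_succ b hb2)
      intro hmem
      have := Ab.lb_max hp hf i (hcast_succ b hb2) hmem
      omega
end

section
/- Let λ be a p-quotient-separated partition and i ∈ ℤ/pℤ with q_{i−1}(λ) > q_i(λ), and let μ = λ^{△i} be the partition obtained by adding all addable i-nodes to λ. Then the abacus display of μ is obtained from that of λ by swapping runners i−1 and i (position kp+i is occupied in μ iff kp+i−1 is occupied in λ, and vice versa); consequently λ^{(j)}(μ-quotient) satisfies μ^{(i)} = λ^{(i−1)}, μ^{(i−1)} = λ^{(i)}, μ^{(j)} = λ^{(j)} otherwise, and q_i(μ) = q_{i−1}(λ)+1, q_{i−1}(μ) = q_i(λ)−1, q_j(μ) = q_j(λ) otherwise. -/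
/-- Row `r` of `f` contains an addable node of residue `i`. -/
def AddRes (p : ℕ) (f : ℕ → ℕ) (i : ZMod p) (r : ℕ) : Prop :=
  ∃ c, Addable f r c ∧ res p r c = i

open Classical in
/-- `λ^{△i}`: the partition obtained from `λ` by adding all its addable `i`-nodes. -/
noncomputable def addAllF (p : ℕ) (i : ZMod p) (f : ℕ → ℕ) : ℕ → ℕ :=
  fun r => f r + (if AddRes p f i r then 1 else 0)

-- bead position of row j
def pos (f : ℕ → ℕ) (j : ℕ) : ℤ := (f j : ℤ) - ((j : ℤ) + 1)

lemma pos_strictAnti (f : ℕ → ℕ) (hf : IsPartition f) : StrictAnti (pos f) := by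
  apply strictAnti_nat_of_succ_lt
  intro n
  have := hf.1 n (n+1) (by omega)
  unfold pos
  push_cast
  omega

lemma mem_occ_iff (f : ℕ → ℕ) (x : ℤ) : x ∈ Occ f ↔ ∃ j, x = pos f j := Iff.rfl

lemma occ_le (f : ℕ → ℕ) (hf : IsPartition f) (x : ℤ) (hx : x ∈ Occ f) :
    x ≤ (f 0 : ℤ) - 1 := by
  obtain ⟨j, rfl⟩ := hx
  have := hf.1 0 j (by omega)
  push_cast
  omega

lemma occ_of_le (f : ℕ → ℕ) (hf : IsPartition f) (x : ℤ)
    (hx : x ≤ -(hf.2.choose : ℤ) - 1) : x ∈ Occ f := by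
  obtain ⟨N, hN⟩ := id hf.2
  refine ⟨(-x - 1).toNat, ?_⟩
  have h1 : (0:ℤ) ≤ -x - 1 := by
    have : (0:ℤ) ≤ (hf.2.choose : ℤ) := by positivity
    omega
  have h2 : ((-x - 1).toNat : ℤ) = -x - 1 := Int.toNat_of_nonneg h1
  have h3 : hf.2.choose ≤ (-x - 1).toNat := by omega
  rw [hf.2.choose_spec _ h3]
  push_cast
  omega

lemma not_occ_of_gt (f : ℕ → ℕ) (hf : IsPartition f) (x : ℤ)
    (hx : ((f 0 : ℤ) - 1) < x) : x ∉ Occ f := fun h => absurd (occ_le f hf x h) (by omega)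

lemma gt_of_not_occ (f : ℕ → ℕ) (hf : IsPartition f) (x : ℤ) (hx : x ∉ Occ f) :
    -(hf.2.choose : ℤ) ≤ x := by
  by_contra h
  exact hx (occ_of_le f hf x (by omega))

lemma coset_dvd (p : ℕ) (x y : ℤ) (h : (x : ZMod p) = (y : ZMod p)) : (p:ℤ) ∣ x - y := by
  rw [ZMod.intCast_eq_intCast_iff] at h
  exact (Int.ModEq.dvd h.symm)

lemma coset_of_dvd (p : ℕ) (x y : ℤ) (h : (p:ℤ) ∣ x - y) : (x : ZMod p) = (y : ZMod p) := by
  rw [ZMod.intCast_eq_intCast_iff]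
  exact Int.ModEq.symm (Int.modEq_iff_dvd.mpr h)

lemma coset_val (p : ℕ) (hp : 2 ≤ p) (j : ZMod p) (K : ℤ) :
    (((j.val : ℤ) + p * K : ℤ) : ZMod p) = j := by
  have : NeZero p := ⟨by omega⟩
  push_cast
  simp [ZMod.natCast_val, ZMod.cast_id]

lemma coset_gap (p : ℕ) (hp : 2 ≤ p) (x t : ℤ) (h : (x : ZMod p) = (t : ZMod p))
    (h1 : t ≤ x) (h2 : x < t + p) : x = t := by
  obtain ⟨k, hk⟩ := coset_dvd p x t h
  have hp0 : (0:ℤ) < p := by exact_mod_cast (by omega : 0 < p)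
  have hk0 : k = 0 := by
    rcases lt_trichotomy k 0 with h' | h' | h'
    · nlinarith
    · exact h'
    · nlinarith
  rw [hk0, mul_zero] at hk
  omega

-- finiteness of beads above a threshold on (a sub-predicate)
lemma fin_beads (f : ℕ → ℕ) (hf : IsPartition f) (P : ℤ → Prop) (t : ℤ) :
    {x : ℤ | x ∈ Occ f ∧ P x ∧ t ≤ x}.Finite := by
  apply (Set.finite_Icc t ((f 0 : ℤ) - 1)).subset
  rintro x ⟨hx, -, ht⟩
  exact ⟨ht, occ_le f hf x hx⟩

lemma fin_spaces (f : ℕ → ℕ) (hf : IsPartition f) (P : ℤ → Prop) (t : ℤ) :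
    {x : ℤ | x ∉ Occ f ∧ P x ∧ x < t}.Finite := by
  apply (Set.finite_Icc (-(hf.2.choose : ℤ)) t).subset
  rintro x ⟨hx, -, ht⟩
  exact ⟨gt_of_not_occ f hf x hx, le_of_lt ht⟩

-- runner nonemptiness / boundedness
lemma beads_lt_nonempty (p : ℕ) (hp : 2 ≤ p) (f : ℕ → ℕ) (hf : IsPartition f)
    (j : ZMod p) (c : ℤ) : ∃ x : ℤ, x ∈ Occ f ∧ (x : ZMod p) = j ∧ x < c := by
  set N := hf.2.choose with hN
  set K : ℕ := j.val + N + c.natAbs + 2 with hK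
  have hc1 : c ≤ (c.natAbs : ℤ) := Int.le_natAbs
  have hKZ : (K : ℤ) = (j.val : ℤ) + N + c.natAbs + 2 := by rw [hK]; push_cast; ring
  have hpK : (K : ℤ) ≤ (p : ℤ) * K := le_mul_of_one_le_left (by positivity)
    (by exact_mod_cast (by omega : 1 ≤ p))
  refine ⟨(j.val : ℤ) - p * K, ?_, ?_, ?_⟩
  · exact occ_of_le f hf _ (by omega)
  · have he : ((j.val : ℤ) - p * K) = (j.val : ℤ) + p * (-(K : ℤ)) := by ring
    rw [he, coset_val p hp]
  · omega

lemma spaces_nonempty (p : ℕ) (hp : 2 ≤ p) (f : ℕ → ℕ) (hf : IsPartition f)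
    (j : ZMod p) : ∃ x : ℤ, (x : ZMod p) = j ∧ x ∉ Occ f := by
  refine ⟨(j.val : ℤ) + p * ((f 0 : ℤ) + 1), coset_val p hp j _, not_occ_of_gt f hf _ ?_⟩
  have h1 : ((f 0 : ℤ) + 1) ≤ (p:ℤ) * ((f 0:ℤ) + 1) := le_mul_of_one_le_left (by positivity)
    (by exact_mod_cast (by omega : 1 ≤ p))
  have : (0:ℤ) ≤ j.val := by positivity
  omega

lemma spaces_bddBelow (f : ℕ → ℕ) (hf : IsPartition f) (P : ℤ → Prop) :
    BddBelow {x : ℤ | P x ∧ x ∉ Occ f} := by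
  refine ⟨-(hf.2.choose : ℤ), fun x hx => gt_of_not_occ f hf x hx.2⟩

lemma beads_bddAbove (f : ℕ → ℕ) (hf : IsPartition f) (P : ℤ → Prop) :
    BddAbove {x : ℤ | P x ∧ x ∈ Occ f} :=
  ⟨(f 0 : ℤ) - 1, fun x hx => occ_le f hf x hx.2⟩

-- firstSpace basic facts
lemma firstSpace_mem (p : ℕ) (hp : 2 ≤ p) (f : ℕ → ℕ) (hf : IsPartition f) (j : ZMod p) :
    ((firstSpace p f j : ZMod p) = j ∧ firstSpace p f j ∉ Occ f) := by
  have := Int.csInf_mem (s := {x : ℤ | (x : ZMod p) = j ∧ x ∉ Occ f})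
    (spaces_nonempty p hp f hf j) (spaces_bddBelow f hf _)
  exact this

lemma firstSpace_le (p : ℕ) (f : ℕ → ℕ) (hf : IsPartition f) (j : ZMod p) (x : ℤ)
    (h1 : (x : ZMod p) = j) (h2 : x ∉ Occ f) : firstSpace p f j ≤ x :=
  csInf_le (spaces_bddBelow f hf _) ⟨h1, h2⟩

lemma lastBead_mem (p : ℕ) (hp : 2 ≤ p) (f : ℕ → ℕ) (hf : IsPartition f) (j : ZMod p) :
    ((lastBead p f j : ZMod p) = j ∧ lastBead p f j ∈ Occ f) := by
  obtain ⟨x, h1, h2, -⟩ := beads_lt_nonempty p hp f hf j 0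
  exact Int.csSup_mem (s := {x : ℤ | (x : ZMod p) = j ∧ x ∈ Occ f}) ⟨x, h2, h1⟩
    (beads_bddAbove f hf _)

lemma le_lastBead (p : ℕ) (f : ℕ → ℕ) (hf : IsPartition f) (j : ZMod p) (x : ℤ)
    (h1 : (x : ZMod p) = j) (h2 : x ∈ Occ f) : x ≤ lastBead p f j :=
  le_csSup (beads_bddAbove f hf _) ⟨h1, h2⟩

-- occupied below firstSpace
lemma occ_of_lt_firstSpace (p : ℕ) (f : ℕ → ℕ) (hf : IsPartition f) (j : ZMod p) (x : ℤ)
    (h1 : (x : ZMod p) = j) (h2 : x < firstSpace p f j) : x ∈ Occ f := by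
  by_contra h
  exact absurd (firstSpace_le p f hf j x h1 h) (by omega)

lemma not_occ_of_gt_lastBead (p : ℕ) (f : ℕ → ℕ) (hf : IsPartition f) (j : ZMod p) (x : ℤ)
    (h1 : (x : ZMod p) = j) (h2 : lastBead p f j < x) : x ∉ Occ f := by
  intro h
  exact absurd (le_lastBead p f hf j x h1 h) (by omega)

/-- charge-style quantity at threshold `t` on runner `j`. -/
noncomputable def QQ (p : ℕ) (f : ℕ → ℕ) (j : ZMod p) (t : ℤ) : ℤ :=
  t + p * ((Set.ncard {x : ℤ | x ∈ Occ f ∧ (x : ZMod p) = j ∧ t ≤ x} : ℤ) -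
           (Set.ncard {x : ℤ | x ∉ Occ f ∧ (x : ZMod p) = j ∧ x < t} : ℤ))

lemma qpos_eq_QQ (p : ℕ) (f : ℕ → ℕ) (j : ZMod p) : qpos p f j = QQ p f j (j.val : ℤ) := rfl

lemma QQ_step (p : ℕ) (hp : 2 ≤ p) (f : ℕ → ℕ) (hf : IsPartition f) (j : ZMod p) (t : ℤ)
    (ht : (t : ZMod p) = j) : QQ p f j (t + p) = QQ p f j t := by
  have hp0 : (0:ℤ) < p := by exact_mod_cast (by omega : 0 < p)
  have key : ∀ x : ℤ, (x : ZMod p) = j → t ≤ x → x < t + p → x = t := by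
    intro x hx h1 h2
    exact coset_gap p hp x t (by rw [hx, ht]) h1 h2
  by_cases hocc : t ∈ Occ f
  · have hA : {x : ℤ | x ∈ Occ f ∧ (x : ZMod p) = j ∧ t ≤ x} =
        insert t {x : ℤ | x ∈ Occ f ∧ (x : ZMod p) = j ∧ t + p ≤ x} := by
      ext x
      simp only [Set.mem_setOf_eq, Set.mem_insert_iff]
      constructor
      · rintro ⟨h1, h2, h3⟩
        rcases lt_or_ge x (t + p) with h4 | h4
        · exact Or.inl (key x h2 h3 h4)
        · exact Or.inr ⟨h1, h2, h4⟩
      · rintro (rfl | ⟨h1, h2, h3⟩)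
        · exact ⟨hocc, ht, le_refl _⟩
        · exact ⟨h1, h2, by omega⟩
    have hB : {x : ℤ | x ∉ Occ f ∧ (x : ZMod p) = j ∧ x < t + p} =
        {x : ℤ | x ∉ Occ f ∧ (x : ZMod p) = j ∧ x < t} := by
      ext x
      simp only [Set.mem_setOf_eq]
      constructor
      · rintro ⟨h1, h2, h3⟩
        refine ⟨h1, h2, ?_⟩
        rcases lt_or_ge x t with h4 | h4
        · exact h4
        · exact absurd (key x h2 h4 h3) (by rintro rfl; exact h1 hocc)
      · rintro ⟨h1, h2, h3⟩
        exact ⟨h1, h2, by omega⟩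
    have hfin : {x : ℤ | x ∈ Occ f ∧ (x : ZMod p) = j ∧ t + p ≤ x}.Finite :=
      fin_beads f hf _ _
    have htni : t ∉ {x : ℤ | x ∈ Occ f ∧ (x : ZMod p) = j ∧ t + p ≤ x} := by
      intro h
      have := h.2.2
      omega
    rw [QQ, QQ, hA, hB, Set.ncard_insert_of_notMem htni hfin]
    push_cast
    ring
  · have hA : {x : ℤ | x ∈ Occ f ∧ (x : ZMod p) = j ∧ t ≤ x} =
        {x : ℤ | x ∈ Occ f ∧ (x : ZMod p) = j ∧ t + p ≤ x} := by
      ext x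
      simp only [Set.mem_setOf_eq]
      constructor
      · rintro ⟨h1, h2, h3⟩
        refine ⟨h1, h2, ?_⟩
        rcases lt_or_ge x (t + p) with h4 | h4
        · exact absurd (key x h2 h3 h4) (by rintro rfl; exact hocc h1)
        · exact h4
      · rintro ⟨h1, h2, h3⟩
        exact ⟨h1, h2, by omega⟩
    have hB : {x : ℤ | x ∉ Occ f ∧ (x : ZMod p) = j ∧ x < t + p} =
        insert t {x : ℤ | x ∉ Occ f ∧ (x : ZMod p) = j ∧ x < t} := by
      ext x
      simp only [Set.mem_setOf_eq, Set.mem_insert_iff]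
      constructor
      · rintro ⟨h1, h2, h3⟩
        rcases lt_or_ge x t with h4 | h4
        · exact Or.inr ⟨h1, h2, h4⟩
        · exact Or.inl (key x h2 h4 h3)
      · rintro (rfl | ⟨h1, h2, h3⟩)
        · exact ⟨hocc, ht, by omega⟩
        · exact ⟨h1, h2, by omega⟩
    have hfin : {x : ℤ | x ∉ Occ f ∧ (x : ZMod p) = j ∧ x < t}.Finite :=
      fin_spaces f hf _ _
    have htni : t ∉ {x : ℤ | x ∉ Occ f ∧ (x : ZMod p) = j ∧ x < t} := by
      intro h
      have := h.2.2
      omega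
    rw [QQ, QQ, hA, hB, Set.ncard_insert_of_notMem htni hfin]
    push_cast
    ring

lemma QQ_const (p : ℕ) (hp : 2 ≤ p) (f : ℕ → ℕ) (hf : IsPartition f) (j : ZMod p) (t : ℤ)
    (ht : (t : ZMod p) = j) : QQ p f j t = qpos p f j := by
  have hkey : ∀ d : ℤ, QQ p f j ((j.val : ℤ) + p * d) = qpos p f j := by
    intro d
    induction d using Int.induction_on with
    | zero => rw [mul_zero, add_zero, qpos_eq_QQ]
    | succ k ih =>
        have h1 : (j.val : ℤ) + p * (k + 1) = ((j.val : ℤ) + p * k) + p := by ring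
        rw [h1, QQ_step p hp f hf j _ (coset_val p hp j k), ih]
    | pred k ih =>
        have h1 : (j.val : ℤ) + p * (-k) = ((j.val : ℤ) + p * (-(k:ℤ) - 1)) + p := by ring
        rw [h1, QQ_step p hp f hf j _ (coset_val p hp j _)] at ih
        exact ih
  have : NeZero p := ⟨by omega⟩
  obtain ⟨d, hd⟩ : ∃ d : ℤ, t = (j.val : ℤ) + p * d := by
    obtain ⟨k, hk⟩ := coset_dvd p t (j.val : ℤ) (by rw [ht]; push_cast; simp [ZMod.natCast_val, ZMod.cast_id])
    exact ⟨k, by omega⟩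
  rw [hd]
  exact hkey d

lemma qpos_eq_firstSpace_add (p : ℕ) (hp : 2 ≤ p) (f : ℕ → ℕ) (hf : IsPartition f)
    (j : ZMod p) :
    qpos p f j = firstSpace p f j +
      p * (Set.ncard {x : ℤ | x ∈ Occ f ∧ (x : ZMod p) = j ∧ firstSpace p f j ≤ x} : ℤ) := by
  obtain ⟨hres, hocc⟩ := firstSpace_mem p hp f hf j
  rw [← QQ_const p hp f hf j _ hres, QQ]
  have hB : {x : ℤ | x ∉ Occ f ∧ (x : ZMod p) = j ∧ x < firstSpace p f j} = ∅ := by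
    ext x
    simp only [Set.mem_setOf_eq, Set.mem_empty_iff_false, iff_false]
    rintro ⟨h1, h2, h3⟩
    exact h1 (occ_of_lt_firstSpace p f hf j x h2 h3)
  rw [hB]
  simp

lemma sub_one_ne (p : ℕ) (hp : 2 ≤ p) (i : ZMod p) : i - 1 ≠ i := by
  intro h
  have h1 : (1 : ZMod p) = 0 := by
    have := sub_eq_self.mp h
    exact this
  have h2 : ((1:ℕ) : ZMod p) = 0 := by exact_mod_cast h1
  have h3 := (ZMod.natCast_eq_zero_iff 1 p).mp h2
  have := Nat.le_of_dvd (by norm_num) h3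
  omega

lemma no_removable (p : ℕ) (hp : 2 ≤ p) (f : ℕ → ℕ) (hf : IsPartition f) (i : ZMod p)
    (hqs : QSep p f) (hq : qpos p f i < qpos p f (i - 1)) :
    ∀ x : ℤ, x ∈ Occ f → (x : ZMod p) = i → x - 1 ∈ Occ f := by
  intro x hx hxi
  by_contra hvac
  have hp0 : (0:ℤ) < p := by exact_mod_cast (by omega : 0 < p)
  set a := firstSpace p f (i-1) with ha
  set a' := firstSpace p f i with ha'
  set b := lastBead p f (i-1) with hb
  set b' := lastBead p f i with hb'
  have hii : i - 1 ≠ i := sub_one_ne p hp i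
  have hx1res : ((x - 1 : ℤ) : ZMod p) = i - 1 := by push_cast; rw [hxi]
  have ha_le : a ≤ x - 1 := firstSpace_le p f hf (i-1) _ hx1res hvac
  have hxb' : x ≤ b' := le_lastBead p f hf i x hxi hx
  have h1 : a < b' := by omega
  have hb_le : b ≤ a' := by
    by_contra h
    exact hqs ⟨i-1, i, hii, h1, by omega⟩
  have hares : (a : ZMod p) = i - 1 := (firstSpace_mem p hp f hf (i-1)).1
  have havac : a ∉ Occ f := (firstSpace_mem p hp f hf (i-1)).2
  have ha'res : (a' : ZMod p) = i := (firstSpace_mem p hp f hf i).1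
  have ha'vac : a' ∉ Occ f := (firstSpace_mem p hp f hf i).2
  have hbres : (b : ZMod p) = i - 1 := (lastBead_mem p hp f hf (i-1)).1
  have hbocc : b ∈ Occ f := (lastBead_mem p hp f hf (i-1)).2
  have hdvd : (p:ℤ) ∣ a' - (a + 1) := by
    refine coset_dvd p a' (a + 1) ?_
    have h5 : ((a + 1 : ℤ) : ZMod p) = i := by push_cast; rw [hares]; ring
    rw [ha'res, h5]
  obtain ⟨s, hs0⟩ := hdvd
  have hs : a' - a - 1 = (p:ℤ) * s := by linarith
  have hqi := qpos_eq_firstSpace_add p hp f hf i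
  have hqi1 := qpos_eq_firstSpace_add p hp f hf (i-1)
  set k := Set.ncard {y : ℤ | y ∈ Occ f ∧ (y : ZMod p) = i ∧ a' ≤ y} with hk
  set m := Set.ncard {y : ℤ | y ∈ Occ f ∧ (y : ZMod p) = i - 1 ∧ a ≤ y} with hm
  rw [← ha'] at hqi
  rw [← ha] at hqi1
  have haa' : a ≠ a' := by
    intro h
    rw [h, ha'res] at hares
    exact hii hares.symm
  rcases lt_or_gt_of_ne haa' with hlt | hgt
  · -- a < a' : q_{i-1} ≤ a' - 1 < a' ≤ q_i
    have hs0 : 0 ≤ s := by nlinarith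
    -- bound m ≤ s.toNat
    have hsub : {y : ℤ | y ∈ Occ f ∧ (y : ZMod p) = i - 1 ∧ a ≤ y} ⊆
        ((Finset.Icc (1:ℤ) s).image (fun t => a + p * t) : Finset ℤ) := by
      rintro y ⟨hy1, hy2, hy3⟩
      have hyb : y ≤ b := le_lastBead p f hf (i-1) y hy2 hy1
      have hya : a < y := by
        rcases eq_or_lt_of_le hy3 with rfl | h
        · exact absurd hy1 havac
        · exact h
      obtain ⟨t, hts⟩ : ∃ t : ℤ, y - a = p * t := by
        refine coset_dvd p y a ?_
        rw [hy2, hares]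
      have ht1 : 1 ≤ t := by nlinarith
      have ht2 : t ≤ s := by nlinarith
      simp only [Finset.coe_image, Set.mem_image, Finset.mem_coe, Finset.mem_Icc]
      exact ⟨t, ⟨ht1, ht2⟩, by omega⟩
    have hmle : (m : ℤ) ≤ s := by
      have h1 : m ≤ ((Finset.Icc (1:ℤ) s).image (fun t => a + p * t)).card := by
        rw [← Set.ncard_coe_finset]
        exact Set.ncard_le_ncard hsub (Set.finite_coe_iff.mp (by infer_instance))
      have h2 : ((Finset.Icc (1:ℤ) s).image (fun t => a + p * t)).card ≤
          (Finset.Icc (1:ℤ) s).card := Finset.card_image_le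
      have h3 : (Finset.Icc (1:ℤ) s).card = (s + 1 - 1).toNat := Int.card_Icc 1 s
      have : m ≤ (s + 1 - 1).toNat := le_trans h1 (le_trans h2 (le_of_eq h3))
      omega
    have hk0 : (0:ℤ) ≤ k := by positivity
    have : qpos p f (i-1) < qpos p f i := by
      rw [hqi, hqi1]
      nlinarith
    omega
  · -- a' < a : q_{i-1} = a ≤ b + p ≤ a' + p ≤ q_i
    have hm0 : m = 0 := by
      have he : {y : ℤ | y ∈ Occ f ∧ (y : ZMod p) = i - 1 ∧ a ≤ y} = ∅ := by
        ext y
        simp only [Set.mem_setOf_eq, Set.mem_empty_iff_false, iff_false]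
        rintro ⟨hy1, hy2, hy3⟩
        have hyb : y ≤ b := le_lastBead p f hf (i-1) y hy2 hy1
        omega
      rw [hm, he, Set.ncard_empty]
    have hk1 : 1 ≤ k := by
      exact (Set.ncard_pos (fin_beads f hf (fun y => (y : ZMod p) = i) a')).mpr
        ⟨x, hx, hxi, by omega⟩
    have habp : a ≤ b + p := by
      have hbpres : ((b + p : ℤ) : ZMod p) = i - 1 := by
        push_cast
        rw [hbres]
        simp
      have hbpvac : (b + p : ℤ) ∉ Occ f := by
        intro h
        have := le_lastBead p f hf (i-1) _ hbpres h
        omega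
      exact firstSpace_le p f hf (i-1) _ hbpres hbpvac
    have : qpos p f (i-1) ≤ qpos p f i := by
      rw [hqi, hqi1, hm0]
      push_cast
      have h6 : (1:ℤ) ≤ k := by exact_mod_cast hk1
      nlinarith
    omega

lemma pos_add_one_mem_iff (f : ℕ → ℕ) (hf : IsPartition f) (r : ℕ) :
    pos f r + 1 ∈ Occ f ↔ (1 ≤ r ∧ f (r - 1) = f r) := by
  constructor
  · rintro ⟨j, hj⟩
    have hj' : pos f j = pos f r + 1 := hj.symm
    have hjr : j < r := by
      by_contra h
      have := (pos_strictAnti f hf).antitone (by omega : r ≤ j)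
      omega
    have hr1 : 1 ≤ r := by omega
    have h1 : pos f (r - 1) ≤ pos f j := (pos_strictAnti f hf).antitone (by omega)
    have h2 : pos f r + 1 ≤ pos f (r - 1) := by
      have hfr : f r ≤ f (r - 1) := hf.1 (r-1) r (by omega)
      unfold pos
      have : ((r : ℤ) - 1) = ((r - 1 : ℕ) : ℤ) := by push_cast [hr1]; ring
      push_cast [hr1]
      omega
    have h3 : pos f (r - 1) = pos f j := by omega
    have h4 : r - 1 = j := (pos_strictAnti f hf).injective h3
    refine ⟨hr1, ?_⟩
    have : pos f (r-1) = pos f r + 1 := by omega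
    unfold pos at this
    push_cast [hr1] at this
    omega
  · rintro ⟨hr1, hfr⟩
    refine ⟨r - 1, ?_⟩
    unfold pos
    push_cast [hr1]
    rw [hfr]
    push_cast
    ring

lemma addRes_iff (p : ℕ) (f : ℕ → ℕ) (hf : IsPartition f) (i : ZMod p) (r : ℕ) :
    AddRes p f i r ↔ (((pos f r + 1 : ℤ) : ZMod p) = i ∧ pos f r + 1 ∉ Occ f) := by
  have hcast : ((pos f r + 1 : ℤ) : ZMod p) = (f r : ZMod p) - (r : ZMod p) := by
    unfold pos
    push_cast
    ring
  constructor
  · rintro ⟨c, ⟨hc, hcond⟩, hres⟩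
    subst hc
    constructor
    · rw [hcast]; exact hres
    · rw [pos_add_one_mem_iff f hf r]
      rintro ⟨hr1, hfr⟩
      rcases hcond with rfl | h
      · omega
      · omega
  · rintro ⟨hres, hocc⟩
    refine ⟨f r, ⟨rfl, ?_⟩, by rw [res, ← hcast]; exact hres⟩
    rcases Nat.eq_zero_or_pos r with rfl | hr
    · exact Or.inl rfl
    · right
      rw [pos_add_one_mem_iff f hf r] at hocc
      have := hf.1 (r-1) r (by omega)
      omega

/-- membership in the abacus of `addAllF` -/
lemma mem_occ_addAllF (p : ℕ) (f : ℕ → ℕ) (hf : IsPartition f) (i : ZMod p) (x : ℤ) :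
    x ∈ Occ (addAllF p i f) ↔ ∃ j : ℕ,
      ((((pos f j + 1 : ℤ) : ZMod p) = i ∧ pos f j + 1 ∉ Occ f) ∧ x = pos f j + 1) ∨
      (¬ (((pos f j + 1 : ℤ) : ZMod p) = i ∧ pos f j + 1 ∉ Occ f) ∧ x = pos f j) := by
  have key : ∀ j : ℕ, (AddRes p f i j →  (addAllF p i f j : ℤ) = (f j : ℤ) + 1) ∧
      (¬ AddRes p f i j → (addAllF p i f j : ℤ) = (f j : ℤ)) := by
    intro j
    constructor
    · intro h
      simp [addAllF, h]
    · intro h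
      simp [addAllF, h]
  constructor
  · rintro ⟨j, hj⟩
    refine ⟨j, ?_⟩
    by_cases h : AddRes p f i j
    · left
      refine ⟨(addRes_iff p f hf i j).mp h, ?_⟩
      rw [hj, (key j).1 h]
      unfold pos
      ring
    · right
      refine ⟨fun hc => h ((addRes_iff p f hf i j).mpr hc), ?_⟩
      rw [hj, (key j).2 h]
      rfl
  · rintro ⟨j, (⟨hc, hx⟩ | ⟨hc, hx⟩)⟩
    · refine ⟨j, ?_⟩
      rw [hx, (key j).1 ((addRes_iff p f hf i j).mpr hc)]
      unfold pos
      ring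
    · refine ⟨j, ?_⟩
      rw [hx, (key j).2 (fun h => hc ((addRes_iff p f hf i j).mp h))]
      rfl

/-- Main swap lemma: assuming no removable `i`-nodes. -/
lemma occ_swap (p : ℕ) (hp : 2 ≤ p) (f : ℕ → ℕ) (hf : IsPartition f) (i : ZMod p)
    (NR : ∀ x : ℤ, x ∈ Occ f → (x : ZMod p) = i → x - 1 ∈ Occ f) (x : ℤ) :
    ((x : ZMod p) = i → (x ∈ Occ (addAllF p i f) ↔ x - 1 ∈ Occ f)) ∧
    ((x : ZMod p) = i - 1 → (x ∈ Occ (addAllF p i f) ↔ x + 1 ∈ Occ f)) ∧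
    ((x : ZMod p) ≠ i → (x : ZMod p) ≠ i - 1 → (x ∈ Occ (addAllF p i f) ↔ x ∈ Occ f)) := by
  have hii : i - 1 ≠ i := sub_one_ne p hp i
  refine ⟨?_, ?_, ?_⟩
  · intro hxi
    rw [mem_occ_addAllF p f hf i x]
    constructor
    · rintro ⟨j, (⟨hc, hx⟩ | ⟨hc, hx⟩)⟩
      · have : x - 1 = pos f j := by omega
        exact this ▸ ⟨j, rfl⟩
      · exact NR x ⟨j, hx⟩ hxi
    · intro hx1
      by_cases hxo : x ∈ Occ f
      · obtain ⟨j, hj⟩ := hxo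
        replace hj : x = pos f j := hj
        refine ⟨j, Or.inr ⟨?_, hj⟩⟩
        rintro ⟨h1, -⟩
        rw [← hj] at h1
        have h2 : ((x + 1 : ℤ) : ZMod p) = i + 1 := by push_cast; rw [hxi]
        rw [h2] at h1
        exact hii (by linear_combination -h1)
      · obtain ⟨j, hj⟩ := hx1
        replace hj : x - 1 = pos f j := hj
        refine ⟨j, Or.inl ⟨⟨?_, ?_⟩, by omega⟩⟩
        · rw [← hj]
          have h3 : x - 1 + 1 = x := by ring
          rw [h3, hxi]
        · rw [← hj]
          have h3 : x - 1 + 1 = x := by ring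
          rw [h3]
          exact hxo
  · intro hxi1
    rw [mem_occ_addAllF p f hf i x]
    constructor
    · rintro ⟨j, (⟨hc, hx⟩ | ⟨hc, hx⟩)⟩
      · exfalso
        have h1 : ((pos f j + 1 : ℤ) : ZMod p) = i := hc.1
        have h2 : pos f j + 1 = x := by omega
        rw [h2, hxi1] at h1
        exact hii h1
      · push_neg at hc
        have h3 : ((pos f j + 1 : ℤ) : ZMod p) = i := by
          push_cast
          rw [← hx, hxi1]
          ring
        have := hc h3
        rw [← hx] at this
        exact this
    · intro hx1
      have hx : x ∈ Occ f := by
        have := NR (x + 1) hx1 (by push_cast; rw [hxi1]; ring)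
        simpa using this
      obtain ⟨j, hj⟩ := hx
      replace hj : x = pos f j := hj
      refine ⟨j, Or.inr ⟨?_, hj⟩⟩
      rintro ⟨-, h2⟩
      rw [← hj] at h2
      exact h2 hx1
  · intro hxi hxi1
    rw [mem_occ_addAllF p f hf i x]
    constructor
    · rintro ⟨j, (⟨hc, hx⟩ | ⟨hc, hx⟩)⟩
      · exfalso
        have h2 : pos f j + 1 = x := by omega
        rw [h2] at hc
        exact hxi hc.1
      · exact ⟨j, hx⟩
    · rintro ⟨j, hj⟩
      replace hj : x = pos f j := hj
      refine ⟨j, Or.inr ⟨?_, hj⟩⟩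
      rintro ⟨h1, -⟩
      apply hxi1
      rw [← hj] at h1
      push_cast at h1
      linear_combination h1

lemma sSup_shift (S : Set ℤ) (c : ℤ) (hne : S.Nonempty) (hbd : BddAbove S) :
    sSup ((fun y => y + c) '' S) = sSup S + c := by
  obtain ⟨u, hu⟩ := hbd
  apply le_antisymm
  · apply csSup_le (hne.image _)
    rintro x ⟨y, hy, rfl⟩
    have := le_csSup (⟨u, hu⟩ : BddAbove S) hy
    show y + c ≤ sSup S + c
    omega
  · have h1 : sSup S ∈ S := Int.csSup_mem hne ⟨u, hu⟩
    have h2 : sSup S + c ∈ (fun y => y + c) '' S := ⟨sSup S, h1, rfl⟩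
    apply le_csSup ⟨u + c, ?_⟩ h2
    rintro x ⟨y, hy, rfl⟩
    have := hu hy
    show y + c ≤ u + c
    omega

section Shift

variable (p : ℕ) (hp : 2 ≤ p) (f g : ℕ → ℕ) (hf : IsPartition f)
  (a b : ZMod p) (c : ℤ)

lemma res_shift (hcast : ((c : ℤ) : ZMod p) = a - b) (x : ℤ) :
    (x : ZMod p) = a ↔ ((x - c : ℤ) : ZMod p) = b := by
  constructor
  · intro h
    push_cast
    rw [h, hcast]
    ring
  · intro h
    push_cast at h
    have : (x : ZMod p) = b + c := by linear_combination h
    rw [this, hcast]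
    ring

variable (hcast : ((c : ℤ) : ZMod p) = a - b)
  (H : ∀ x : ℤ, (x : ZMod p) = a → (x ∈ Occ g ↔ x - c ∈ Occ f))

include hcast H in
lemma bead_set_shift0 :
    {x : ℤ | x ∈ Occ g ∧ (x : ZMod p) = a} =
      (fun y => y + c) '' {y : ℤ | y ∈ Occ f ∧ (y : ZMod p) = b} := by
  ext x
  simp only [Set.mem_setOf_eq, Set.mem_image]
  constructor
  · rintro ⟨h1, h2⟩
    refine ⟨x - c, ⟨(H x h2).mp h1, (res_shift p a b c hcast x).mp h2⟩, by ring⟩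
  · rintro ⟨y, ⟨h1, h2⟩, rfl⟩
    have hres : ((y + c : ℤ) : ZMod p) = a := by
      rw [res_shift p a b c hcast]
      simpa using h2
    refine ⟨(H _ hres).mpr (by simpa using h1), hres⟩

include hcast H in
lemma bead_set_shift_lt (B : ℤ) :
    {x : ℤ | x ∈ Occ g ∧ (x : ZMod p) = a ∧ x < B + c} =
      (fun y => y + c) '' {y : ℤ | y ∈ Occ f ∧ (y : ZMod p) = b ∧ y < B} := by
  ext x
  simp only [Set.mem_setOf_eq, Set.mem_image]
  constructor
  · rintro ⟨h1, h2, h3⟩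
    refine ⟨x - c, ⟨(H x h2).mp h1, (res_shift p a b c hcast x).mp h2, by omega⟩, by ring⟩
  · rintro ⟨y, ⟨h1, h2, h3⟩, rfl⟩
    have hres : ((y + c : ℤ) : ZMod p) = a := by
      rw [res_shift p a b c hcast]
      simpa using h2
    exact ⟨(H _ hres).mpr (by simpa using h1), hres, by omega⟩

include hcast H in
lemma bead_set_shift_ge (t : ℤ) :
    {x : ℤ | x ∈ Occ g ∧ (x : ZMod p) = a ∧ t + c ≤ x} =
      (fun y => y + c) '' {y : ℤ | y ∈ Occ f ∧ (y : ZMod p) = b ∧ t ≤ y} := by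
  ext x
  simp only [Set.mem_setOf_eq, Set.mem_image]
  constructor
  · rintro ⟨h1, h2, h3⟩
    refine ⟨x - c, ⟨(H x h2).mp h1, (res_shift p a b c hcast x).mp h2, by omega⟩, by ring⟩
  · rintro ⟨y, ⟨h1, h2, h3⟩, rfl⟩
    have hres : ((y + c : ℤ) : ZMod p) = a := by
      rw [res_shift p a b c hcast]
      simpa using h2
    exact ⟨(H _ hres).mpr (by simpa using h1), hres, by omega⟩

include hcast H in
lemma space_set_shift_lt (B : ℤ) :
    {x : ℤ | x ∉ Occ g ∧ (x : ZMod p) = a ∧ x < B + c} =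
      (fun y => y + c) '' {y : ℤ | y ∉ Occ f ∧ (y : ZMod p) = b ∧ y < B} := by
  ext x
  simp only [Set.mem_setOf_eq, Set.mem_image]
  constructor
  · rintro ⟨h1, h2, h3⟩
    refine ⟨x - c, ⟨fun hc' => h1 ((H x h2).mpr hc'),
      (res_shift p a b c hcast x).mp h2, by omega⟩, by ring⟩
  · rintro ⟨y, ⟨h1, h2, h3⟩, rfl⟩
    have hres : ((y + c : ℤ) : ZMod p) = a := by
      rw [res_shift p a b c hcast]
      simpa using h2
    refine ⟨fun hc' => h1 ?_, hres, by omega⟩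
    have := (H _ hres).mp hc'
    simpa using this

include hp hf hcast H in
lemma nthBead_shift : ∀ k : ℕ, nthBead p g a k = nthBead p f b k + c := by
  intro k
  induction k with
  | zero =>
      show sSup _ = sSup _ + c
      rw [bead_set_shift0 p f g a b c hcast H]
      apply sSup_shift
      · obtain ⟨y, h1, h2, -⟩ := beads_lt_nonempty p hp f hf b 0
        exact ⟨y, h1, h2⟩
      · exact ⟨(f 0 : ℤ) - 1, fun y hy => occ_le f hf y hy.1⟩
  | succ k ih =>
      show sSup _ = sSup _ + c
      rw [ih, bead_set_shift_lt p f g a b c hcast H (nthBead p f b k)]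
      apply sSup_shift
      · obtain ⟨y, h1, h2, h3⟩ := beads_lt_nonempty p hp f hf b (nthBead p f b k)
        exact ⟨y, h1, h2, h3⟩
      · exact ⟨(f 0 : ℤ) - 1, fun y hy => occ_le f hf y hy.1⟩

include hp hf hcast H in
lemma quotFn_shift : quotFn p g a = quotFn p f b := by
  funext k
  show Set.ncard _ = Set.ncard _
  rw [nthBead_shift p hp f g hf a b c hcast H k,
    space_set_shift_lt p f g a b c hcast H (nthBead p f b k),
    Set.ncard_image_of_injective _ (add_left_injective c)]

include hp hf hcast H in
lemma QQ_shift (t : ℤ) : QQ p g a (t + c) = QQ p f b t + c := by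
  rw [QQ, QQ, bead_set_shift_ge p f g a b c hcast H t,
    space_set_shift_lt p f g a b c hcast H t,
    Set.ncard_image_of_injective _ (add_left_injective c),
    Set.ncard_image_of_injective _ (add_left_injective c)]
  ring

include hp hf hcast H in
lemma qpos_shift (hga : ((a.val : ℤ) : ZMod p) = a) : qpos p g a = qpos p f b + c := by
  have h1 : qpos p g a = QQ p g a ((a.val : ℤ)) := qpos_eq_QQ p g a
  have h2 : ((a.val : ℤ)) = ((a.val : ℤ) - c) + c := by ring
  rw [h1, h2, QQ_shift p hp f g hf a b c hcast H ((a.val : ℤ) - c),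
    QQ_const p hp f hf b _ ((res_shift p a b c hcast _).mp hga)]

end Shift

/-- If `λ` is `p`-quotient-separated and `q_{i−1}(λ) > q_i(λ)`, and `μ = λ^{△i}`,
then the abacus display of `μ` is obtained from that of `λ` by swapping runners
`i−1` and `i`; consequently `μ^{(i)} = λ^{(i−1)}`, `μ^{(i−1)} = λ^{(i)}`,
`μ^{(j)} = λ^{(j)}` for other `j`, and `q_i(μ) = q_{i−1}(λ)+1`,
`q_{i−1}(μ) = q_i(λ)−1`, `q_j(μ) = q_j(λ)` for other `j`. -/
theorem stmt14 (p : ℕ) (hp : 2 ≤ p) (f : ℕ → ℕ) (hf : IsPartition f) (i : ZMod p)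
    (hqs : QSep p f) (hq : qpos p f i < qpos p f (i - 1)) :
    (∀ x : ℤ, (x : ZMod p) = i →
      ((x ∈ Occ (addAllF p i f) ↔ x - 1 ∈ Occ f) ∧
       (x - 1 ∈ Occ (addAllF p i f) ↔ x ∈ Occ f))) ∧
    quotFn p (addAllF p i f) i = quotFn p f (i - 1) ∧
    quotFn p (addAllF p i f) (i - 1) = quotFn p f i ∧
    (∀ j : ZMod p, j ≠ i → j ≠ i - 1 → quotFn p (addAllF p i f) j = quotFn p f j) ∧
    qpos p (addAllF p i f) i = qpos p f (i - 1) + 1 ∧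
    qpos p (addAllF p i f) (i - 1) = qpos p f i - 1 ∧
    (∀ j : ZMod p, j ≠ i → j ≠ i - 1 → qpos p (addAllF p i f) j = qpos p f j) := by
  have NR := no_removable p hp f hf i hqs hq
  have hNZ : NeZero p := ⟨by omega⟩
  set g := addAllF p i f with hgdef
  have hswap := occ_swap p hp f hf i NR
  have Hi : ∀ x : ℤ, (x : ZMod p) = i → (x ∈ Occ g ↔ x - 1 ∈ Occ f) :=
    fun x hx => (hswap x).1 hx
  have Hi1 : ∀ x : ℤ, (x : ZMod p) = i - 1 → (x ∈ Occ g ↔ x - (-1) ∈ Occ f) := by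
    intro x hx
    have h := (hswap x).2.1 hx
    simpa [sub_neg_eq_add] using h
  have Ho : ∀ j : ZMod p, j ≠ i → j ≠ i - 1 →
      ∀ x : ℤ, (x : ZMod p) = j → (x ∈ Occ g ↔ x - 0 ∈ Occ f) := by
    intro j hj hj1 x hx
    have h := (hswap x).2.2 (by rw [hx]; exact hj) (by rw [hx]; exact hj1)
    simpa using h
  have hcast1 : ((1 : ℤ) : ZMod p) = i - (i - 1) := by push_cast; ring
  have hcast2 : (((-1) : ℤ) : ZMod p) = (i - 1) - i := by push_cast; ring
  have hcast0 : ∀ j : ZMod p, ((0 : ℤ) : ZMod p) = j - j := by intro j; simp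
  have hval : ∀ j : ZMod p, ((j.val : ℤ) : ZMod p) = j := by
    intro j
    push_cast
    simp [ZMod.natCast_val, ZMod.cast_id]
  refine ⟨?_, ?_, ?_, ?_, ?_, ?_, ?_⟩
  · intro x hx
    refine ⟨Hi x hx, ?_⟩
    have hres : ((x - 1 : ℤ) : ZMod p) = i - 1 := by push_cast; rw [hx]
    have h := (hswap (x - 1)).2.1 hres
    simpa using h
  · exact quotFn_shift p hp f g hf i (i - 1) 1 hcast1 Hi
  · exact quotFn_shift p hp f g hf (i - 1) i (-1) hcast2 Hi1
  · intro j hj hj1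
    exact quotFn_shift p hp f g hf j j 0 (hcast0 j) (Ho j hj hj1)
  · exact qpos_shift p hp f g hf i (i - 1) 1 hcast1 Hi (hval i)
  · have h := qpos_shift p hp f g hf (i - 1) i (-1) hcast2 Hi1 (hval (i - 1))
    omega
  · intro j hj hj1
    have h := qpos_shift p hp f g hf j j 0 (hcast0 j) (Ho j hj hj1) (hval j)
    omega
end

section
/- Let p = 2h+1 be an odd prime and let λ be a self-conjugate partition. If 0 ≤ i < h and the partition λ^{▿±i} (obtained from λ by repeatedly removing all removable nodes of residue i and −i mod p) is an R-partition of type I, then λ is itself an R-partition of type I. -/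
/-- The conjugate partition, as a parts function. -/
noncomputable def conjFn (f : ℕ → ℕ) : ℕ → ℕ :=
  fun c => Set.ncard {r : ℕ | c < f r}

/-- The number of boxes `|λ|` of a partition. -/
noncomputable def psize (f : ℕ → ℕ) : ℕ := Set.ncard {q : ℕ × ℕ | Cell f q.1 q.2}

open Classical in
/-- One pass of removing all the removable nodes of `f` of residue `i` or `−i`. -/
noncomputable def stepPM (p : ℕ) (i : ZMod p) (f : ℕ → ℕ) : ℕ → ℕ :=
  fun r => f r - (if ∃ c, Removable f r c ∧ (res p r c = i ∨ res p r c = -i) then 1 else 0)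

/-- `λ^{▿±i}`: the partition obtained from `λ` by repeatedly removing all removable
nodes of residue `i` and `−i` (iterating until no such nodes remain; `|λ|` passes
certainly suffice). -/
noncomputable def remPM (p : ℕ) (i : ZMod p) (f : ℕ → ℕ) : ℕ → ℕ :=
  (stepPM p i)^[psize f] f

/-- `λ` is an R-partition of type I (abacus characterisation): `λ` is self-conjugate
and there is some `j ≥ 0` such that position `jp+h` of the abacus display is occupied
while all other positions later than `h−1` are vacant. -/
def RTypeI (p h : ℕ) (f : ℕ → ℕ) : Prop :=
  conjFn f = f ∧ ∃ j : ℕ, ((j : ℤ) * p + h ∈ Occ f ∧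
    ∀ x : ℤ, (h : ℤ) - 1 < x → x ≠ (j : ℤ) * p + h → x ∉ Occ f)

/-- Let `p = 2h+1` be an odd prime and `λ` self-conjugate. If `0 ≤ i < h` and
`λ^{▿±i}` is an R-partition of type I, then so is `λ`. -/
theorem stmt16 (p h : ℕ) (hp : p.Prime) (hodd : p = 2 * h + 1)
    (f : ℕ → ℕ) (hf : IsPartition f) (hsc : conjFn f = f)
    (i : ℕ) (hi : i < h)
    (hR : RTypeI p h (remPM p (i : ZMod p) f)) :
    RTypeI p h f := by
  haveI : Fact p.Prime := ⟨hp⟩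
  set ii : ZMod p := (i : ZMod p) with hii
  -- cast helper: casts of small naturals to ZMod p are injective
  have hcast : ∀ a b : ℕ, a < p → b < p → ((a : ZMod p) = (b : ZMod p)) → a = b := by
    intro a b ha hb H
    rwa [ZMod.natCast_eq_natCast_iff, Nat.ModEq, Nat.mod_eq_of_lt ha, Nat.mod_eq_of_lt hb] at H
  have hone : (1 : ZMod p) ≠ 0 := one_ne_zero
  -- arithmetic facts about residues
  have A1 : ∀ a : ZMod p, (a = ii ∨ a = -ii) → ¬(a - 1 = ii ∨ a - 1 = -ii) := by
    rintro a (rfl | rfl) (H | H)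
    · exact hone (by linear_combination -H)
    · have h1 : ((2 * i : ℕ) : ZMod p) = ((1 : ℕ) : ZMod p) := by
        push_cast; linear_combination H
      have := hcast _ _ (by omega) (by omega) h1; omega
    · have h1 : ((2 * i + 1 : ℕ) : ZMod p) = ((0 : ℕ) : ZMod p) := by
        push_cast; linear_combination -H
      have := hcast _ _ (by omega) (by omega) h1; omega
    · exact hone (by linear_combination -H)
  have A2 : ¬((h : ZMod p) = ii ∨ (h : ZMod p) = -ii) := by
    rintro (H | H)
    · have := hcast h i (by omega) (by omega) H; omega
    · have h1 : ((h + i : ℕ) : ZMod p) = ((0 : ℕ) : ZMod p) := by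
        push_cast; linear_combination H
      have := hcast _ _ (by omega) (by omega) h1; omega
  have A3 : ¬((h : ZMod p) + 1 = ii ∨ (h : ZMod p) + 1 = -ii) := by
    rintro (H | H)
    · have h1 : ((h + 1 : ℕ) : ZMod p) = ((i : ℕ) : ZMod p) := by
        push_cast; linear_combination H
      have := hcast _ _ (by omega) (by omega) h1; omega
    · have h1 : ((h + 1 + i : ℕ) : ZMod p) = ((0 : ℕ) : ZMod p) := by
        push_cast; linear_combination H
      have := hcast _ _ (by omega) (by omega) h1; omega
  -- key invariant: each row loses at most one box, and only when the bead
  -- position has residue ±i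
  have key : ∀ n r, ((stepPM p ii)^[n] f) r = f r ∨
      (((stepPM p ii)^[n] f) r + 1 = f r ∧
        ((f r : ZMod p) - ((r : ZMod p) + 1) = ii ∨
         (f r : ZMod p) - ((r : ZMod p) + 1) = -ii)) := by
    intro n
    induction n with
    | zero => intro r; left; rfl
    | succ n ih =>
      intro r
      rw [Function.iterate_succ_apply']
      set g := (stepPM p ii)^[n] f with hg
      by_cases hE : ∃ c, Removable g r c ∧ (res p r c = ii ∨ res p r c = -ii)
      · have hstep : stepPM p ii g r = g r - 1 := by
          simp only [stepPM, if_pos hE]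
        obtain ⟨c, ⟨hc1, _⟩, hres⟩ := hE
        rcases ih r with hcase | ⟨hcase, hres0⟩
        · right
          constructor
          · omega
          · have hfr : f r = c + 1 := by omega
            have hrw : (f r : ZMod p) - ((r : ZMod p) + 1) = res p r c := by
              rw [hfr]; unfold res; push_cast; ring
            rw [hrw]; exact hres
        · exfalso
          have hc2 : c + 2 = f r := by omega
          have hcc : (c : ZMod p) = (f r : ZMod p) - 2 := by
            have := congrArg (fun a : ℕ => (a : ZMod p)) hc2
            push_cast at this; linear_combination this
          have hrw : res p r c = ((f r : ZMod p) - ((r : ZMod p) + 1)) - 1 := by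
            unfold res; rw [hcc]; ring
          rw [hrw] at hres
          exact A1 _ hres0 hres
      · have hstep : stepPM p ii g r = g r := by
          simp only [stepPM, if_neg hE]; omega
        rw [hstep]; exact ih r
  have hrem : remPM p ii f = (stepPM p ii)^[psize f] f := rfl
  have keyy := key (psize f)
  obtain ⟨hconj, j₀, hmem, hvac⟩ := hR
  rw [hrem] at hmem hvac
  refine ⟨hsc, j₀, ?_, ?_⟩
  · -- position j₀ p + h is occupied in f
    obtain ⟨r, hr⟩ := hmem
    rcases keyy r with hcase | ⟨hcase, hres⟩
    · exact ⟨r, by rw [hcase] at hr; exact hr⟩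
    · exfalso
      have hGr : (((stepPM p ii)^[psize f] f) r : ℤ) = (f r : ℤ) - 1 := by omega
      have hint : (f r : ℤ) - ((r : ℤ) + 1) = (j₀ : ℤ) * p + h + 1 := by
        rw [hGr] at hr; linarith
      have := congrArg (fun z : ℤ => (z : ZMod p)) hint
      push_cast [ZMod.natCast_self] at this
      have hρ : (f r : ZMod p) - ((r : ZMod p) + 1) = (h : ZMod p) + 1 := by
        linear_combination this
      rw [hρ] at hres
      exact A3 hres
  · -- every other position later than h-1 is vacant in f
    intro x hx hxne hxOcc
    obtain ⟨r, hr⟩ := hxOcc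
    rcases keyy r with hcase | ⟨hcase, hres⟩
    · exact hvac x hx hxne ⟨r, by rw [hcase]; exact hr⟩
    · have hGr : (((stepPM p ii)^[psize f] f) r : ℤ) = (f r : ℤ) - 1 := by omega
      have hx1mem : x - 1 ∈ Occ ((stepPM p ii)^[psize f] f) := ⟨r, by rw [hGr]; omega⟩
      have hρ : (f r : ZMod p) - ((r : ZMod p) + 1) = ((x : ℤ) : ZMod p) := by
        have := congrArg (fun z : ℤ => (z : ZMod p)) hr
        push_cast at this; linear_combination -this
      by_cases hxh : x = (h : ℤ)
      · rw [hxh] at hρ; push_cast at hρ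
        rw [hρ] at hres; exact A2 hres
      · have hxgt : (h : ℤ) - 1 < x - 1 := by omega
        by_cases hx1j : x - 1 = (j₀ : ℤ) * p + h
        · have := congrArg (fun z : ℤ => (z : ZMod p)) hx1j
          push_cast [ZMod.natCast_self] at this
          have hx' : ((x : ℤ) : ZMod p) = (h : ZMod p) + 1 := by linear_combination this
          rw [hx'] at hρ; rw [hρ] at hres; exact A3 hres
        · exact hvac (x - 1) hxgt hx1j hx1mem
end

section
/- Let λ be a partition, let Re(λ) be the λ-tableau of type λ^rest in which the entry at node (x,y) is x plus the number of nodes below (x,y) in the same ramp which are not nodes of λ. If (a,b) and (c,d) are nodes of λ with (p−1)a + b ≤ (p−1)c + d, then Re(λ)_{a,b} ≤ Re(λ)_{c,d} when a = c, and Re(λ)_{a,b} < Re(λ)_{c,d} when a < c. In particular, Re(λ) is a semistandard tableau. -/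
/-- The tableau `Re(λ)` (with 0-indexed row entries): the entry at node `(r, c)` is
`r` plus the number of nodes below `(r, c)` in the same ramp which are not nodes of
`λ`; i.e. the row to which the node `(r, c)` moves when `λ^rest` is formed. -/
noncomputable def ReT (p : ℕ) (f : ℕ → ℕ) (r c : ℕ) : ℕ :=
  r + Set.ncard {q : ℕ × ℕ | r < q.1 ∧ rampOf p q.1 q.2 = rampOf p r c ∧ ¬ Cell f q.1 q.2}

/-- The set counted in `ReT`. -/
def Sset (p : ℕ) (f : ℕ → ℕ) (r c : ℕ) : Set (ℕ × ℕ) :=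
  {q : ℕ × ℕ | r < q.1 ∧ rampOf p q.1 q.2 = rampOf p r c ∧ ¬ Cell f q.1 q.2}

lemma Sset_finite (p : ℕ) (hp : 2 ≤ p) (f : ℕ → ℕ) (r c : ℕ) :
    (Sset p f r c).Finite := by
  have hp' : (1 : ℤ) ≤ (p : ℤ) - 1 := by
    have : (2 : ℤ) ≤ (p : ℤ) := by exact_mod_cast hp
    linarith
  apply Set.Finite.subset ((Set.finite_Iic (r + c)).prod (Set.finite_Iic (c + p * r)))
  rintro ⟨q1, q2⟩ ⟨h1, h2, _⟩
  simp only [rampOf] at h2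
  have hq1 : (r : ℤ) + 1 ≤ (q1 : ℤ) := by exact_mod_cast h1
  have hq2 : (0 : ℤ) ≤ (q2 : ℤ) := Int.ofNat_nonneg q2
  constructor
  · have : (q1 : ℤ) ≤ (r : ℤ) + (c : ℤ) := by
      nlinarith [mul_nonneg (by linarith : (0:ℤ) ≤ (p:ℤ) - 1 - 1)
        (by linarith : (0:ℤ) ≤ (q1:ℤ) - (r:ℤ))]
    exact_mod_cast this
  · have : (q2 : ℤ) ≤ (c : ℤ) + (p : ℤ) * (r : ℤ) := by
      nlinarith [mul_nonneg (by linarith : (0:ℤ) ≤ (p:ℤ) - 1)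
        (by linarith : (0:ℤ) ≤ (q1:ℤ)), Int.ofNat_nonneg r]
    exact_mod_cast this

lemma key (p : ℕ) (hp : 2 ≤ p) (f : ℕ → ℕ) (a b c d : ℕ) (hac : a ≤ c)
    (hcd : Cell f c d) (hr : rampOf p a b ≤ rampOf p c d) :
    (Sset p f a b).ncard ≤ (c - a - 1) + (Sset p f c d).ncard := by
  set T1 : Set (ℕ × ℕ) := Sset p f a b ∩ {q | q.1 ≤ c} with hT1
  set T2 : Set (ℕ × ℕ) := Sset p f a b ∩ {q | c < q.1} with hT2
  have hsplit : Sset p f a b = T1 ∪ T2 := by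
    ext q
    simp only [hT1, hT2, Set.mem_union, Set.mem_inter_iff, Set.mem_setOf_eq]
    constructor
    · intro h; rcases le_or_gt q.1 c with h' | h'
      · exact Or.inl ⟨h, h'⟩
      · exact Or.inr ⟨h, h'⟩
    · rintro (⟨h, _⟩ | ⟨h, _⟩) <;> exact h
  -- bound T1 by Ioo a c
  have h1 : T1.ncard ≤ c - a - 1 := by
    have hbd : T1.ncard ≤ (Set.Ioo a c).ncard := by
      refine Set.ncard_le_ncard_of_injOn Prod.fst ?_ ?_ (Set.finite_Ioo a c)
      · rintro ⟨q1, q2⟩ ⟨⟨hq1, hq2, hq3⟩, hle⟩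
        simp only [Set.mem_setOf_eq] at hle
        simp only [Set.mem_Ioo]
        refine ⟨hq1, lt_of_le_of_ne hle ?_⟩
        intro hq1c
        subst hq1c
        apply hq3
        -- q2 ≤ d, so (q1, q2) is a cell
        have : (q2 : ℤ) ≤ (d : ℤ) := by
          simp only [rampOf] at hq2 hr
          linarith [hq2, hr]
        have hq2d : q2 ≤ d := by exact_mod_cast this
        exact lt_of_le_of_lt hq2d hcd
      · rintro ⟨q1, q2⟩ ⟨⟨_, hq2, _⟩, _⟩ ⟨q1', q2'⟩ ⟨⟨_, hq2', _⟩, _⟩ hfst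
        simp only at hfst
        subst hfst
        have : (q2 : ℤ) = (q2' : ℤ) := by
          simp only [rampOf] at hq2 hq2'
          linarith [hq2, hq2']
        have : q2 = q2' := by exact_mod_cast this
        simp [this]
    rwa [← Finset.coe_Ioo, Set.ncard_coe_finset, Nat.card_Ioo] at hbd
  -- bound T2 by Sset c d via column shift
  have h2 : T2.ncard ≤ (Sset p f c d).ncard := by
    set Δ : ℕ := (rampOf p c d - rampOf p a b).toNat with hΔ
    have hΔe : (Δ : ℤ) = rampOf p c d - rampOf p a b := by
      rw [hΔ, Int.toNat_of_nonneg (by linarith)]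
    refine Set.ncard_le_ncard_of_injOn (fun q => (q.1, q.2 + Δ)) ?_ ?_ (Sset_finite p hp f c d)
    · rintro ⟨q1, q2⟩ ⟨⟨_, hq2, hq3⟩, hlt⟩
      simp only [Set.mem_setOf_eq] at hlt
      refine ⟨hlt, ?_, ?_⟩
      · simp only [rampOf] at hq2 ⊢
        push_cast
        simp only [rampOf] at hΔe
        linarith [hq2, hΔe]
      · intro hcell
        exact hq3 (lt_of_le_of_lt (Nat.le_add_right q2 Δ) hcell)
    · rintro ⟨q1, q2⟩ _ ⟨q1', q2'⟩ _ heq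
      simp only [Prod.mk.injEq] at heq
      obtain ⟨h1, h2⟩ := heq
      have : q2 = q2' := by omega
      simp [h1, this]
  calc (Sset p f a b).ncard = (T1 ∪ T2).ncard := by rw [hsplit]
    _ ≤ T1.ncard + T2.ncard := Set.ncard_union_le T1 T2
    _ ≤ (c - a - 1) + (Sset p f c d).ncard := Nat.add_le_add h1 h2

/-- If `(a,b)` and `(c,d)` are nodes of `λ` with the ramp of `(a,b)` no later than
the ramp of `(c,d)`, then `Re(λ)_{a,b} ≤ Re(λ)_{c,d}` when `a = c` and
`Re(λ)_{a,b} < Re(λ)_{c,d}` when `a < c`. In particular `Re(λ)` is semistandard. -/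
theorem stmt19 (p : ℕ) (hp : 2 ≤ p) (f : ℕ → ℕ) (hf : IsPartition f) :
    (∀ a b c d : ℕ, Cell f a b → Cell f c d → rampOf p a b ≤ rampOf p c d →
        ((a = c → ReT p f a b ≤ ReT p f c d) ∧ (a < c → ReT p f a b < ReT p f c d))) ∧
    (∀ r c : ℕ, Cell f r c → Cell f r (c + 1) → ReT p f r c ≤ ReT p f r (c + 1)) ∧
    (∀ r c : ℕ, Cell f r c → Cell f (r + 1) c → ReT p f r c < ReT p f (r + 1) c) := by
  have hReT : ∀ r c : ℕ, ReT p f r c = r + (Sset p f r c).ncard := fun _ _ => rfl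
  have main : ∀ a b c d : ℕ, Cell f a b → Cell f c d → rampOf p a b ≤ rampOf p c d →
      ((a = c → ReT p f a b ≤ ReT p f c d) ∧ (a < c → ReT p f a b < ReT p f c d)) := by
    intro a b c d _ hcd hr
    constructor
    · intro hac
      have hk := key p hp f a b c d hac.le hcd hr
      rw [hReT, hReT]
      omega
    · intro hac
      have hk := key p hp f a b c d hac.le hcd hr
      rw [hReT, hReT]
      omega
  have hp' : (1 : ℤ) ≤ (p : ℤ) - 1 := by
    have : (2 : ℤ) ≤ (p : ℤ) := by exact_mod_cast hp
    linarith
  refine ⟨main, ?_, ?_⟩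
  · intro r c h1 h2
    refine (main r c r (c + 1) h1 h2 ?_).1 rfl
    simp only [rampOf]
    push_cast
    linarith
  · intro r c h1 h2
    refine (main r c (r + 1) c h1 h2 ?_).2 (Nat.lt_succ_self r)
    simp only [rampOf]
    push_cast
    nlinarith [Int.ofNat_nonneg r]
end
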